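/- arXiv:2510.25131 — 7 statements merged into one kernel-verified Lean document; each statement's English description precedes it below -/
import Mathlib

section
/- Let T > 0 and let Φ(s) = Σ_{k=1}^K β_k · exp(−m_k·T·s) be a finite sum of delayed exponentials, where K ≥ 1, the β_k are real numbers not all zero, and the m_k are distinct positive integers. Then for every real g ≥ 0 and every complex s with Re s > g, one has |Φ(s)| < sup { |Φ(w)| : w ∈ ℂ, Re w = g }. -/
open Complex Real Filter Set

/-- For `Φ(s) = Σ_{k=1}^K β_k exp(-m_k T s)` with real `β_k` not all zero and
distinct positive integers `m_k`, for every `g ≥ 0` and every `s` with `Re s > g`,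
`|Φ(s)| < sup { |Φ(w)| : Re w = g }`. -/
theorem stmt0
    (T : ℝ) (hT : 0 < T)
    (K : ℕ) (hK : 1 ≤ K)
    (β : Fin K → ℝ) (hβ : ∃ k, β k ≠ 0)
    (m : Fin K → ℕ) (hm : ∀ k, 0 < m k) (hm_inj : Function.Injective m)
    (Φ : ℂ → ℂ)
    (hΦ : ∀ s : ℂ, Φ s = ∑ k : Fin K, (β k : ℂ) * Complex.exp (-((m k : ℂ) * (T : ℂ) * s)))
    (g : ℝ) (hg : 0 ≤ g)
    (s : ℂ) (hs : g < s.re) :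
    ‖Φ s‖ < sSup {x : ℝ | ∃ w : ℂ, w.re = g ∧ x = ‖Φ w‖} := by
  set P : ℂ → ℂ := fun z => ∑ k : Fin K, (β k : ℂ) * z ^ (m k) with hP
  -- Φ w = P (exp (-(T w)))
  have hΦP : ∀ w : ℂ, Φ w = P (Complex.exp (-((T : ℂ) * w))) := by
    intro w
    rw [hΦ]
    refine Finset.sum_congr rfl fun k _ => ?_
    congr 1
    rw [← Complex.exp_nat_mul]
    congr 1
    ring
  have habs : ∀ w : ℂ, ‖Complex.exp (-((T : ℂ) * w))‖ = Real.exp (-(T * w.re)) := by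
    intro w
    rw [Complex.norm_exp]
    congr 1
    simp
  set r : ℝ := Real.exp (-(T * g)) with hr
  have hr0 : 0 < r := Real.exp_pos _
  set z₀ : ℂ := Complex.exp (-((T : ℂ) * s)) with hz₀def
  have hz₀ : ‖z₀‖ < r := by
    rw [hz₀def, habs, hr]
    exact Real.exp_lt_exp.2 (by nlinarith)
  -- P differentiable
  have hPd : Differentiable ℂ P := by
    apply Differentiable.fun_sum
    intro k _
    exact (differentiable_const _).mul (differentiable_pow _)
  -- max of |P| on sphere
  obtain ⟨ζ₀, hζ₀mem, hζ₀max⟩ :=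
    (isCompact_sphere (0 : ℂ) r).exists_isMaxOn
      (NormedSpace.sphere_nonempty.2 hr0.le)
      (continuous_norm.comp hPd.continuous).continuousOn
  have hζ₀abs : ‖ζ₀‖ = r := by
    simpa using mem_sphere_zero_iff_norm.1 hζ₀mem
  -- everything in closed ball bounded by |P ζ₀|
  have hball : ∀ z ∈ Metric.closedBall (0 : ℂ) r, ‖P z‖ ≤ ‖P ζ₀‖ := by
    intro z hz
    have := Complex.norm_le_of_forall_mem_frontier_norm_le (U := Metric.ball (0 : ℂ) r)
      Metric.isBounded_ball (hPd.diffContOnCl)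
      (fun w hw => by
        rw [frontier_ball _ hr0.ne'] at hw
        exact hζ₀max hw)
      (z := z) (by rwa [closure_ball _ hr0.ne'])
    exact this
  -- strict inequality at z₀
  have hstrict : ‖P z₀‖ < ‖P ζ₀‖ := by
    by_contra hge
    push_neg at hge
    have hz₀ball : z₀ ∈ Metric.ball (0 : ℂ) r := by
      simpa [Metric.mem_ball, Complex.dist_eq] using hz₀
    have hmax : IsMaxOn (norm ∘ P) (Metric.ball (0 : ℂ) r) z₀ := by
      intro z hz
      have h1 : ‖P z‖ ≤ ‖P ζ₀‖ :=
        hball z (Metric.ball_subset_closedBall hz)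
      simp only [Function.comp, Set.mem_setOf_eq]
      exact le_trans h1 hge
    have heq := Complex.eqOn_of_isPreconnected_of_isMaxOn_norm
      (convex_ball (0 : ℂ) r).isPreconnected Metric.isOpen_ball
      hPd.differentiableOn hz₀ball hmax
    -- P 0 = 0
    have hP0 : P 0 = 0 := by
      rw [hP]
      simp only
      apply Finset.sum_eq_zero
      intro k _
      rw [zero_pow (hm k).ne']
      ring
    have h0ball : (0 : ℂ) ∈ Metric.ball (0 : ℂ) r := by simp [hr0]
    have hPz₀0 : P z₀ = 0 := by
      have := heq h0ball
      simp only [Function.const] at this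
      rw [← this, hP0]
    -- P vanishes on the ball
    have hvan : ∀ z ∈ Metric.ball (0 : ℂ) r, P z = 0 := by
      intro z hz
      have := heq hz
      simp only [Function.const] at this
      rw [this, hPz₀0]
    -- polynomial argument
    set p : Polynomial ℂ := ∑ k : Fin K, Polynomial.C (β k : ℂ) * Polynomial.X ^ (m k) with hpdef
    have hpeval : ∀ z : ℂ, p.eval z = P z := by
      intro z
      rw [hpdef, hP]
      simp [Polynomial.eval_finset_sum]
    have hp0 : p = 0 := by
      apply Polynomial.eq_zero_of_infinite_isRoot
      refine Set.infinite_of_injective_forall_mem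
        (f := fun n : ℕ => ((r / (n + 2) : ℝ) : ℂ)) ?_ ?_
      · intro a b hab
        have h : ((r / ((a:ℝ) + 2) : ℝ) : ℂ) = ((r / ((b:ℝ) + 2) : ℝ) : ℂ) := hab
        have h2 := Complex.ofReal_inj.1 h
        have h3 := (div_eq_div_iff (by positivity) (by positivity)).1 h2
        have h4 := mul_left_cancel₀ hr0.ne' h3
        exact Nat.cast_injective (by linarith : (a:ℝ) = b)
      · intro n
        have hmem : ((r / (n + 2) : ℝ) : ℂ) ∈ Metric.ball (0 : ℂ) r := by
          simp only [Metric.mem_ball, Complex.dist_eq, sub_zero, Complex.norm_real, Real.norm_eq_abs]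
          rw [abs_of_pos (by positivity)]
          rw [div_lt_iff₀ (by positivity)]
          nlinarith
        show p.IsRoot _
        rw [Polynomial.IsRoot, hpeval]
        exact hvan _ hmem
    obtain ⟨k₀, hk₀⟩ := hβ
    have hcoeff : p.coeff (m k₀) = (β k₀ : ℂ) := by
      rw [hpdef, Polynomial.finset_sum_coeff]
      rw [Finset.sum_eq_single k₀]
      · simp [Polynomial.coeff_C_mul, Polynomial.coeff_X_pow]
      · intro k _ hk
        simp only [Polynomial.coeff_C_mul, Polynomial.coeff_X_pow]
        rw [if_neg (fun h => hk (hm_inj h.symm))]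
        ring
      · intro h
        exact absurd (Finset.mem_univ k₀) h
    rw [hp0] at hcoeff
    simp at hcoeff
    exact hk₀ (by exact_mod_cast hcoeff.symm)
  -- realize ζ₀ as exp(-(T w₀)) with Re w₀ = g
  have hζ₀ne : ζ₀ ≠ 0 := by
    intro h
    rw [h] at hζ₀abs
    simp at hζ₀abs
    exact hr0.ne' hζ₀abs.symm
  set w₀ : ℂ := -(Complex.log ζ₀) / (T : ℂ) with hw₀def
  have hw₀re : w₀.re = g := by
    rw [hw₀def]
    rw [div_ofReal_re]
    rw [neg_re, Complex.log_re, hζ₀abs, hr, Real.log_exp]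
    field_simp
  have hexpw₀ : Complex.exp (-((T : ℂ) * w₀)) = ζ₀ := by
    rw [hw₀def]
    have hTne : (T : ℂ) ≠ 0 := by exact_mod_cast hT.ne'
    have : -((T : ℂ) * (-(Complex.log ζ₀) / (T : ℂ))) = Complex.log ζ₀ := by
      field_simp
    rw [this, Complex.exp_log hζ₀ne]
  -- assemble
  set S : Set ℝ := {x : ℝ | ∃ w : ℂ, w.re = g ∧ x = ‖Φ w‖} with hS
  have hbdd : BddAbove S := by
    refine ⟨∑ k : Fin K, |β k|, ?_⟩
    rintro x ⟨w, hwre, rfl⟩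
    rw [hΦ]
    calc ‖∑ k : Fin K, (β k : ℂ) * Complex.exp (-((m k : ℂ) * (T : ℂ) * w))‖
        ≤ ∑ k : Fin K, ‖(β k : ℂ) * Complex.exp (-((m k : ℂ) * (T : ℂ) * w))‖ := by
          exact norm_sum_le _ _
      _ ≤ ∑ k : Fin K, |β k| := by
          apply Finset.sum_le_sum
          intro k _
          rw [norm_mul, Complex.norm_real, Real.norm_eq_abs, Complex.norm_exp]
          have hre : (-((m k : ℂ) * (T : ℂ) * w)).re = -((m k : ℝ) * T * w.re) := by simp
          rw [hre, hwre]
          have : Real.exp (-((m k : ℝ) * T * g)) ≤ 1 := by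
            rw [Real.exp_le_one_iff]
            have : (0:ℝ) ≤ (m k : ℝ) * T * g := by positivity
            linarith
          nlinarith [abs_nonneg (β k), Real.exp_pos (-((m k : ℝ) * T * g))]
  have hmem : ‖Φ w₀‖ ∈ S := ⟨w₀, hw₀re, rfl⟩
  have h1 : ‖Φ s‖ = ‖P z₀‖ := by rw [hΦP]
  have h2 : ‖Φ w₀‖ = ‖P ζ₀‖ := by rw [hΦP, hexpw₀]
  calc ‖Φ s‖ = ‖P z₀‖ := h1
    _ < ‖P ζ₀‖ := hstrict
    _ = ‖Φ w₀‖ := h2.symm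
    _ ≤ sSup S := le_csSup hbdd hmem
end

section
/- Let T > 0 and let Φ(s) = Σ_{k=1}^K β_k · exp(−m_k·T·s) with real β_k not all zero and distinct positive integers m_k, and assume |Φ(iω)| ≤ 1 for every real ω. Let ω_b > 0. Then the open-loop transfer function Γ(s) = (ω_c·L/2)·((1+Φ(s))/(1−Φ(s)))·(ω_b/(s+ω_b)) has no poles in the open right half-plane: for every complex s with Re s > 0 one has 1 − Φ(s) ≠ 0 and s + ω_b ≠ 0. -/
open Complex Real Filter Set

/-- The open-loop transfer function
`Γ(s) = (ω_c L/2)·((1+Φ(s))/(1−Φ(s)))·(ω_b/(s+ω_b))` has no poles in the open right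
half-plane: `1 − Φ(s) ≠ 0` and `s + ω_b ≠ 0` whenever `Re s > 0`. -/
theorem stmt2
    (T : ℝ) (hT : 0 < T)
    (K : ℕ) (hK : 1 ≤ K)
    (β : Fin K → ℝ) (hβ : ∃ k, β k ≠ 0)
    (m : Fin K → ℕ) (hm : ∀ k, 0 < m k) (hm_inj : Function.Injective m)
    (Φ : ℂ → ℂ)
    (hΦ : ∀ s : ℂ, Φ s = ∑ k : Fin K, (β k : ℂ) * Complex.exp (-((m k : ℂ) * (T : ℂ) * s)))
    (hbound : ∀ ω : ℝ, ‖Φ (Complex.I * (ω : ℂ))‖ ≤ 1)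
    (ωb ωc L : ℝ) (hωb : 0 < ωb) (hωc : 0 < ωc) (hL : 0 < L) :
    ∀ s : ℂ, 0 < s.re → (1 - Φ s ≠ 0 ∧ s + (ωb : ℂ) ≠ 0) := by
  intro s hs
  have hTne : (T : ℂ) ≠ 0 := by
    exact_mod_cast ne_of_gt hT
  -- the polynomial f
  set f : ℂ → ℂ := fun z => ∑ k : Fin K, (β k : ℂ) * z ^ (m k) with hf
  have hdiff : Differentiable ℂ f := by
    apply Differentiable.fun_sum
    intro k _
    exact (differentiable_const _).mul (differentiable_pow _)
  have hΦf : ∀ w : ℂ, Φ w = f (Complex.exp (-((T : ℂ) * w))) := by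
    intro w
    rw [hΦ]
    simp only [hf]
    congr 1
    funext k
    congr 1
    rw [← Complex.exp_nat_mul]
    congr 1
    ring
  -- boundary bound
  have hcirc : ∀ z : ℂ, ‖z‖ = 1 → ‖f z‖ ≤ 1 := by
    intro z hz
    have hωval := hbound (-(z.arg) / T)
    rw [hΦf] at hωval
    have : Complex.exp (-((T : ℂ) * (Complex.I * ((-(z.arg) / T : ℝ) : ℂ)))) = z := by
      have : -((T : ℂ) * (Complex.I * ((-(z.arg) / T : ℝ) : ℂ))) = (z.arg : ℂ) * Complex.I := by
        push_cast
        field_simp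
      rw [this]
      conv_rhs => rw [← Complex.norm_mul_exp_arg_mul_I z]
      rw [hz]
      simp
    rwa [this] at hωval
  -- max modulus on closed ball
  have hball : ∀ z : ℂ, ‖z‖ ≤ 1 → ‖f z‖ ≤ 1 := by
    intro z hz
    have hUb : Bornology.IsBounded (Metric.ball (0:ℂ) 1) := Metric.isBounded_ball
    have hdc : DiffContOnCl ℂ f (Metric.ball (0:ℂ) 1) := hdiff.diffContOnCl
    have hfr : ∀ w ∈ frontier (Metric.ball (0:ℂ) 1), ‖f w‖ ≤ 1 := by
      intro w hw
      rw [frontier_ball (0:ℂ) one_ne_zero] at hw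
      exact hcirc w (by simpa [Complex.norm_def] using hw)
    have hzcl : z ∈ closure (Metric.ball (0:ℂ) 1) := by
      rw [closure_ball (0:ℂ) one_ne_zero]
      simpa [Complex.norm_def] using hz
    exact Complex.norm_le_of_forall_mem_frontier_norm_le hUb hdc hfr hzcl
  constructor
  · intro hcontra
    have hΦ1 : Φ s = 1 := by linear_combination -hcontra
    set z₀ : ℂ := Complex.exp (-((T : ℂ) * s)) with hz₀
    have hz₀lt : ‖z₀‖ < 1 := by
      rw [hz₀, Complex.norm_exp]
      have : (-((T : ℂ) * s)).re = -(T * s.re) := by simp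
      rw [this]
      have : -(T * s.re) < 0 := by nlinarith
      calc Real.exp (-(T * s.re)) < Real.exp 0 := Real.exp_lt_exp.mpr this
        _ = 1 := Real.exp_zero
    have hfz₀ : f z₀ = 1 := by rw [← hΦf, hΦ1]
    -- z₀ is interior max
    have hmax : IsMaxOn (norm ∘ f) (Metric.ball (0:ℂ) 1) z₀ := by
      intro w hw
      simp only [Function.comp_apply, mem_setOf_eq]
      have := hball w (le_of_lt (by simpa [Complex.norm_def] using hw))
      rw [hfz₀]
      simpa [Complex.norm_def] using this
    have hz₀mem : z₀ ∈ Metric.ball (0:ℂ) 1 := by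
      simpa [Complex.norm_def] using hz₀lt
    have heq := Complex.eqOn_of_isPreconnected_of_isMaxOn_norm
      (convex_ball (0:ℂ) 1).isPreconnected Metric.isOpen_ball hdiff.differentiableOn
      hz₀mem hmax
    have h0 : f 0 = f z₀ := heq (by simp)
    have hf0 : f 0 = 0 := by
      simp only [hf]
      apply Finset.sum_eq_zero
      intro k _
      rw [zero_pow (hm k).ne']
      ring
    rw [hf0, hfz₀] at h0
    exact zero_ne_one h0
  · intro hcontra
    have : (s + (ωb : ℂ)).re = s.re + ωb := by simp
    have h2 : s.re + ωb = 0 := by rw [← this, hcontra]; simp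
    nlinarith
end

section
/- Let T > 0 and let Φ(s) = Σ_{k=1}^K β_k · exp(−m_k·T·s) with real β_k not all zero and distinct positive integers m_k, and assume |Φ(iω)| ≤ 1 for every real ω. Let ω_b, ω_c, L > 0 and Γ(s) = (ω_c·L/2)·((1+Φ(s))/(1−Φ(s)))·(ω_b/(s+ω_b)). Then 1 + Γ(s) ≠ 0 for every complex s with Re s > 0; consequently the sensitivity function S(s) = 1/(1+Γ(s)) is well defined (and has no zeros) on the open right half-plane. -/
open Complex Real Filter Set

/-- For the open-loop transfer function
`Γ(s) = (ω_c L/2)·((1+Φ(s))/(1−Φ(s)))·(ω_b/(s+ω_b))`, one has `1 + Γ(s) ≠ 0` for every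
`s` with `Re s > 0`, so the sensitivity function `S(s) = 1/(1+Γ(s))` is well defined and
zero-free on the open right half-plane. -/
theorem stmt3
    (T : ℝ) (hT : 0 < T)
    (K : ℕ) (hK : 1 ≤ K)
    (β : Fin K → ℝ) (hβ : ∃ k, β k ≠ 0)
    (m : Fin K → ℕ) (hm : ∀ k, 0 < m k) (hm_inj : Function.Injective m)
    (Φ : ℂ → ℂ)
    (hΦ : ∀ s : ℂ, Φ s = ∑ k : Fin K, (β k : ℂ) * Complex.exp (-((m k : ℂ) * (T : ℂ) * s)))
    (hbound : ∀ ω : ℝ, ‖Φ (Complex.I * (ω : ℂ))‖ ≤ 1)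
    (ωb ωc L : ℝ) (hωb : 0 < ωb) (hωc : 0 < ωc) (hL : 0 < L)
    (Γ : ℂ → ℂ)
    (hΓ : ∀ s : ℂ, Γ s = ((ωc : ℂ) * (L : ℂ) / 2) * ((1 + Φ s) / (1 - Φ s))
        * ((ωb : ℂ) / (s + (ωb : ℂ)))) :
    ∀ s : ℂ, 0 < s.re → 1 + Γ s ≠ 0 := by
  intro s hs
  -- the auxiliary entire function f with Φ s = e^{-Ts} · f(e^{-Ts})
  set f : ℂ → ℂ := fun z => ∑ k : Fin K, (β k : ℂ) * z ^ (m k - 1) with hf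
  have hdiff : Differentiable ℂ f := by
    apply Differentiable.fun_sum
    intro k _
    exact (differentiable_pow _).const_mul _
  have hfactor : ∀ s' : ℂ, Φ s' = Complex.exp (-(T * s')) * f (Complex.exp (-(T * s'))) := by
    intro s'
    rw [hΦ, hf]
    simp only [Finset.mul_sum]
    apply Finset.sum_congr rfl
    intro k _
    have h1 : Complex.exp (-((m k : ℂ) * (T : ℂ) * s')) = Complex.exp (-(T * s')) ^ (m k) := by
      rw [← Complex.exp_nat_mul]
      congr 1
      ring
    have h2 : Complex.exp (-(T * s')) ^ (m k)
        = Complex.exp (-(T * s')) * Complex.exp (-(T * s')) ^ (m k - 1) := by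
      conv_lhs => rw [← Nat.succ_pred_eq_of_pos (hm k)]
      rw [pow_succ']
      rfl
    rw [h1, h2]; ring
  -- boundary bound
  have key : ∀ z : ℂ, ‖z‖ = 1 → ‖f z‖ ≤ 1 := by
    intro z hz
    set ω : ℝ := -z.arg / T with hω
    have hzexp : Complex.exp (-(T * (Complex.I * (ω : ℂ)))) = z := by
      have hTne : (T : ℂ) ≠ 0 := Complex.ofReal_ne_zero.mpr hT.ne'
      have he : -((T : ℂ) * (Complex.I * (ω : ℂ))) = z.arg * Complex.I := by
        rw [hω]
        push_cast
        field_simp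
      rw [he]
      conv_rhs => rw [← Complex.norm_mul_exp_arg_mul_I z]
      rw [hz]
      simp
    have hb := hbound ω
    rw [hfactor (Complex.I * (ω : ℂ)), hzexp, norm_mul, hz, one_mul] at hb
    exact hb
  -- |e^{-Ts}| < 1
  have hz0 : ‖Complex.exp (-(T * s))‖ < 1 := by
    rw [Complex.norm_exp]
    apply Real.exp_lt_one_iff.mpr
    simp [Complex.mul_re]
    positivity
  -- maximum modulus
  have hmax : ‖f (Complex.exp (-(T * s)))‖ ≤ 1 := by
    have := Complex.norm_le_of_forall_mem_frontier_norm_le (U := Metric.ball (0 : ℂ) 1)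
      Metric.isBounded_ball (hdiff.diffContOnCl)
      (C := 1) ?_ (z := Complex.exp (-(T * s))) ?_
    · exact this
    · intro z hz
      rw [frontier_ball (0 : ℂ) one_ne_zero] at hz
      simp only [mem_sphere_iff_norm, sub_zero] at hz
      exact key z hz
    · rw [closure_ball (0 : ℂ) one_ne_zero]
      simp only [Metric.mem_closedBall, dist_zero_right]
      exact hz0.le
  -- |Φ s| < 1
  have hΦs : ‖Φ s‖ < 1 := by
    rw [hfactor s, norm_mul]
    calc ‖Complex.exp (-(T * s))‖ * ‖f (Complex.exp (-(T * s)))‖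
        ≤ ‖Complex.exp (-(T * s))‖ * 1 := by
          exact mul_le_mul_of_nonneg_left hmax (norm_nonneg _)
      _ < 1 := by rw [mul_one]; exact hz0
  set w := Φ s with hwdef
  have hnsq : Complex.normSq w < 1 := by
    have := Complex.sq_norm w
    nlinarith [norm_nonneg w]
  have hw1 : (1 : ℂ) - w ≠ 0 := by
    intro h
    have : w = 1 := by linear_combination -h
    rw [this] at hΦs
    simp at hΦs
  -- Re A > 0 for A = (1+w)/(1-w)
  set A : ℂ := (1 + w) / (1 - w) with hA
  have hNpos : 0 < Complex.normSq (1 - w) := Complex.normSq_pos.mpr hw1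
  have hAre : 0 < A.re := by
    rw [hA, Complex.div_re]
    simp only [Complex.add_re, Complex.one_re, Complex.sub_re, Complex.add_im,
      Complex.one_im, Complex.sub_im]
    rw [← add_div]
    apply div_pos _ hNpos
    have : Complex.normSq w = w.re * w.re + w.im * w.im := Complex.normSq_apply w
    nlinarith
  have hAne : A ≠ 0 := fun h => by simp [h] at hAre
  -- Re B > 0 for B = ωb/(s+ωb)
  set B : ℂ := (ωb : ℂ) / (s + (ωb : ℂ)) with hB
  have hsne : s + (ωb : ℂ) ≠ 0 := by
    intro h
    have : (s + (ωb : ℂ)).re = 0 := by rw [h]; simp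
    simp [Complex.add_re] at this
    linarith
  have hBre : 0 < B.re := by
    rw [hB, Complex.div_re]
    have h1 : (s + (ωb : ℂ)).re = s.re + ωb := by simp
    have h2 : ((ωb : ℂ)).re = ωb := rfl
    have h3 : ((ωb : ℂ)).im = 0 := rfl
    rw [h1, h2, h3]
    simp only [zero_mul, zero_div, add_zero]
    apply div_pos _ (Complex.normSq_pos.mpr hsne)
    nlinarith
  -- the contradiction
  set c : ℂ := (ωc : ℂ) * (L : ℂ) / 2 with hc
  have hcre : c.re = ωc * L / 2 := by rw [hc]; simp
  have hcim : c.im = 0 := by rw [hc]; simp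
  have hcne : c ≠ 0 := by
    intro h
    have h0 : c.re = 0 := by rw [h]; rfl
    rw [hcre] at h0
    nlinarith
  intro heq
  have h2 : c * A * B = -1 := by
    have h := hΓ s
    rw [h] at heq
    linear_combination heq
  have hcA : c * A ≠ 0 := mul_ne_zero hcne hAne
  have hBval : B = -(c * A)⁻¹ := by
    have h3 : (c * A) * B = (c * A) * (-(c * A)⁻¹) := by
      rw [h2]
      field_simp
    exact mul_left_cancel₀ hcA h3
  have : B.re < 0 := by
    rw [hBval]
    simp only [Complex.neg_re, Complex.inv_re]
    have hcAre : (c * A).re = c.re * A.re := by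
      rw [Complex.mul_re, hcim]; ring
    rw [hcAre, hcre]
    have hN : 0 < Complex.normSq (c * A) := Complex.normSq_pos.mpr hcA
    have : 0 < ωc * L / 2 * A.re := by positivity
    have := div_pos this hN
    linarith
  linarith
end

section
/- (Bode-like sensitivity integral, discrete time.) Let T, ω_b, ω_c, L > 0 and let Φ̃(z) = Σ_{k=1}^K p_k·z^{−k} with real coefficients p_k. Define Γ̃(z) = (ω_c·L/2)·((1+Φ̃(z))/(1−Φ̃(z)))·(ω_b·T·z/((1+ω_b·T)·z − 1)) and S̃(z) = 1/(1+Γ̃(z)). Assume 1 − Φ̃(z) ≠ 0 and 1 + Γ̃(z) ≠ 0 for every complex z with |z| > 1. Then lim_{ε→1⁺} ∫₀^{2π} ln|S̃(ε·e^{iΩ})| dΩ = 2π·ln(2+2·ω_b·T) − 2π·ln(2+2·ω_b·T+ω_b·ω_c·L·T). -/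
open Complex Real Filter Set MeasureTheory Topology intervalIntegral

lemma integral_log_abs_one_sub_circle (a : ℂ) (ha : ‖a‖ < 1) :
    ∫ Ω in (0:ℝ)..(2*π), Real.log (‖1 - a * Complex.exp ((Ω:ℂ) * Complex.I)‖) = 0 := by
  -- term functions
  set F : ℕ → ℝ → ℝ := fun n Ω => -(((a * Complex.exp ((Ω:ℂ) * Complex.I)) ^ n / n).re) with hF
  have habs : ∀ Ω : ℝ, ‖a * Complex.exp ((Ω:ℂ) * Complex.I)‖ = ‖a‖ := by
    intro Ω
    rw [norm_mul, Complex.norm_exp_ofReal_mul_I, mul_one]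
  -- pointwise identity
  have hpt : ∀ Ω : ℝ, Real.log (‖1 - a * Complex.exp ((Ω:ℂ) * Complex.I)‖)
      = ∑' n : ℕ, F n Ω := by
    intro Ω
    set u : ℂ := a * Complex.exp ((Ω:ℂ) * Complex.I)
    have hu : ‖u‖ < 1 := by rwa [habs]
    have h1 : HasSum (fun n : ℕ => u ^ n / n) (-Complex.log (1 - u)) :=
      Complex.hasSum_taylorSeries_neg_log hu
    have h2 : HasSum (fun n : ℕ => (u ^ n / n).re) ((-Complex.log (1 - u)).re) :=
      (Complex.reCLM.hasSum h1)
    have h3 := h2.neg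
    have : Real.log (‖1 - u‖) = -(-Complex.log (1 - u)).re := by
      simp [Complex.log_re]
    rw [this, ← h3.tsum_eq]
  have h2π : (0:ℝ) ≤ 2*π := by positivity
  have hcont : ∀ n, Continuous (F n) := by
    intro n
    rw [hF]
    fun_prop
  have hint : ∀ n, IntegrableOn (F n) (Ioc (0:ℝ) (2*π)) volume := by
    intro n
    exact (hcont n).integrableOn_Ioc
  have hbound : ∀ n Ω, ‖F n Ω‖ ≤ (‖a‖) ^ n := by
    intro n Ω
    rw [hF]
    simp only [norm_neg, Real.norm_eq_abs]
    calc |((a * Complex.exp ((Ω:ℂ) * Complex.I)) ^ n / n).re|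
        ≤ ‖(a * Complex.exp ((Ω:ℂ) * Complex.I)) ^ n / n‖ := Complex.abs_re_le_norm _
      _ = (‖a‖) ^ n / n := by rw [norm_div, norm_pow, habs]; simp
      _ ≤ (‖a‖) ^ n := by
          rcases Nat.eq_zero_or_pos n with h | h
          · simp [h]
          · apply div_le_self (by positivity)
            exact_mod_cast h
  have hnormint : ∀ n, ∫ Ω in Ioc (0:ℝ) (2*π), ‖F n Ω‖ ≤ (2*π) * (‖a‖) ^ n := by
    intro n
    calc ∫ Ω in Ioc (0:ℝ) (2*π), ‖F n Ω‖
        ≤ ∫ _ in Ioc (0:ℝ) (2*π), (‖a‖) ^ n := by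
          apply setIntegral_mono_on (hint n).norm (integrableOn_const (by
            rw [Real.volume_Ioc]; exact ENNReal.ofReal_ne_top)) measurableSet_Ioc
          intro Ω _
          exact hbound n Ω
      _ = (2*π) * (‖a‖) ^ n := by
          rw [setIntegral_const, Real.volume_real_Ioc_of_le h2π, smul_eq_mul]
          ring_nf
  have hsum : Summable fun n => ∫ Ω in Ioc (0:ℝ) (2*π), ‖F n Ω‖ := by
    apply Summable.of_nonneg_of_le
      (fun n => integral_nonneg fun Ω => norm_nonneg _) hnormint
    exact (summable_geometric_of_lt_one (norm_nonneg a) ha).mul_left _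
  -- each term integrates to zero
  have hterm : ∀ n, (∫ Ω in (0:ℝ)..(2*π), F n Ω) = 0 := by
    intro n
    rcases Nat.eq_zero_or_pos n with h | h
    · subst h
      simp [hF]
    · have hcalc : ∀ Ω : ℝ, F n Ω = -((a ^ n / n) * Complex.exp (((n:ℂ) * Complex.I) * Ω)).re := by
        intro Ω
        simp only [hF]
        congr 2
        rw [mul_pow, ← Complex.exp_nat_mul]
        ring_nf
      have hc : ((n:ℂ) * Complex.I) ≠ 0 :=
        mul_ne_zero (Nat.cast_ne_zero.mpr h.ne') Complex.I_ne_zero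
      have hcomplex : (∫ Ω in (0:ℝ)..(2*π), (a ^ n / n) * Complex.exp (((n:ℂ) * Complex.I) * Ω)) = 0 := by
        rw [intervalIntegral.integral_const_mul, integral_exp_mul_complex hc]
        have h1 : Complex.exp ((n:ℂ) * Complex.I * (2*(π:ℂ))) = 1 := by
          rw [show (n:ℂ) * Complex.I * (2*(π:ℂ)) = (n:ℂ) * (2*(π:ℂ)*Complex.I) by ring,
            Complex.exp_nat_mul_two_pi_mul_I]
        push_cast
        rw [h1]
        simp
      have hre : (∫ Ω in (0:ℝ)..(2*π), ((a ^ n / n) * Complex.exp (((n:ℂ) * Complex.I) * Ω)).re)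
          = (∫ Ω in (0:ℝ)..(2*π), (a ^ n / n) * Complex.exp (((n:ℂ) * Complex.I) * Ω)).re := by
        rw [intervalIntegral.integral_of_le h2π, intervalIntegral.integral_of_le h2π]
        have hi : IntegrableOn (fun Ω : ℝ => (a ^ n / (n:ℂ)) * Complex.exp (((n:ℂ) * Complex.I) * (Ω:ℂ)))
            (Ioc (0:ℝ) (2*π)) volume := Continuous.integrableOn_Ioc (by fun_prop)
        exact Complex.reCLM.integral_comp_comm hi
      rw [intervalIntegral.integral_congr (fun Ω _ => hcalc Ω), intervalIntegral.integral_neg,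
        hre, hcomplex]
      simp
  -- put it together
  rw [intervalIntegral.integral_congr (fun Ω _ => hpt Ω), intervalIntegral.integral_of_le h2π]
  rw [← integral_tsum_of_summable_integral_norm hint hsum]
  have hz : ∀ n, (∫ Ω in Ioc (0:ℝ) (2*π), F n Ω) = 0 := by
    intro n
    rw [← intervalIntegral.integral_of_le h2π]
    exact hterm n
  rw [tsum_congr hz, tsum_zero]


lemma abs_circle (r Ω : ℝ) (hr : 0 ≤ r) :
    ‖(r:ℂ) * Complex.exp ((Ω:ℂ) * Complex.I)‖ = r := by
  rw [norm_mul, Complex.norm_exp_ofReal_mul_I, mul_one, Complex.norm_real, Real.norm_eq_abs, _root_.abs_of_nonneg hr]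

lemma integral_log_abs_circle_sub (r : ℝ) (hr : 0 < r) (z : ℂ) (hz : r < ‖z‖) :
    ∫ Ω in (0:ℝ)..(2*π), Real.log (‖(r:ℂ) * Complex.exp ((Ω:ℂ) * Complex.I) - z‖)
      = 2 * π * Real.log (‖z‖) := by
  have hz0 : z ≠ 0 := by
    intro h
    rw [h, norm_zero] at hz
    linarith
  set a : ℂ := (r:ℂ) / z with ha
  have haa : ‖a‖ < 1 := by
    rw [ha, norm_div, Complex.norm_real, Real.norm_eq_abs, _root_.abs_of_nonneg hr.le, div_lt_one (norm_pos_iff.mpr hz0)]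
    exact hz
  have key : ∀ Ω : ℝ, (r:ℂ) * Complex.exp ((Ω:ℂ) * Complex.I) - z
      = (-z) * (1 - a * Complex.exp ((Ω:ℂ) * Complex.I)) := by
    intro Ω
    have haz : a * z = r := by rw [ha]; exact div_mul_cancel₀ _ hz0
    linear_combination (-Complex.exp ((Ω:ℂ) * Complex.I)) * haz
  have hne : ∀ Ω : ℝ, (1 : ℂ) - a * Complex.exp ((Ω:ℂ) * Complex.I) ≠ 0 := by
    intro Ω h
    have h1 : ‖a * Complex.exp ((Ω:ℂ) * Complex.I)‖ = ‖a‖ := by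
      rw [norm_mul, Complex.norm_exp_ofReal_mul_I, mul_one]
    have : (1:ℂ) = a * Complex.exp ((Ω:ℂ) * Complex.I) := by linear_combination h
    rw [← this] at h1
    simp at h1
    rw [h1] at haa
    linarith
  have hpt : ∀ Ω : ℝ, Real.log (‖(r:ℂ) * Complex.exp ((Ω:ℂ) * Complex.I) - z‖)
      = Real.log (‖z‖)
        + Real.log (‖1 - a * Complex.exp ((Ω:ℂ) * Complex.I)‖) := by
    intro Ω
    rw [key Ω, norm_mul, norm_neg]
    rw [Real.log_mul (norm_ne_zero_iff.mpr hz0) (norm_ne_zero_iff.mpr (hne Ω))]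
  rw [intervalIntegral.integral_congr (fun Ω _ => hpt Ω)]
  have hcont : Continuous fun Ω : ℝ =>
      Real.log (‖1 - a * Complex.exp ((Ω:ℂ) * Complex.I)‖) := by
    apply Continuous.log
    · exact continuous_norm.comp (by fun_prop)
    · exact fun Ω => norm_ne_zero_iff.mpr (hne Ω)
  rw [intervalIntegral.integral_add (intervalIntegrable_const) (hcont.intervalIntegrable _ _),
    integral_log_abs_one_sub_circle a haa, intervalIntegral.integral_const]
  simp only [sub_zero, smul_eq_mul, add_zero]

lemma integral_log_abs_poly (Q : Polynomial ℂ)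
    (hQ : ∀ w : ℂ, ‖w‖ < 1 → Q.eval w ≠ 0)
    (r : ℝ) (hr0 : 0 < r) (hr1 : r < 1) :
    ∫ Ω in (0:ℝ)..(2*π),
        Real.log (‖Q.eval ((r:ℂ) * Complex.exp ((Ω:ℂ) * Complex.I))‖)
      = 2 * π * Real.log (‖Q.eval 0‖) := by
  have habs0 : ‖(0:ℂ)‖ < 1 := by simp
  have hcirc : ∀ Ω : ℝ, ‖(r:ℂ) * Complex.exp ((Ω:ℂ) * Complex.I)‖ < 1 := by
    intro Ω
    rw [abs_circle r Ω hr0.le]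
    exact hr1
  generalize hd : Q.natDegree = n
  induction n using Nat.strong_induction_on generalizing Q with
  | _ n ih =>
    rcases Nat.eq_zero_or_pos n with hn | hn
    · subst hn
      obtain ⟨c, rfl⟩ := Polynomial.natDegree_eq_zero.mp hd
      simp only [Polynomial.eval_C]
      rw [intervalIntegral.integral_const]
      simp only [sub_zero, smul_eq_mul]
    · have hdeg : 0 < Q.degree :=
        Polynomial.natDegree_pos_iff_degree_pos.mp (by omega)
      obtain ⟨z, hz⟩ := Complex.exists_root hdeg
      have hz1 : 1 ≤ ‖z‖ := by
        by_contra hlt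
        exact hQ z (lt_of_not_ge hlt) hz
      have hz0 : z ≠ 0 := by
        intro h
        rw [h, norm_zero] at hz1
        linarith
      obtain ⟨Q1, hQ1eq⟩ := Polynomial.dvd_iff_isRoot.mpr hz
      have hQ1ne : ∀ w : ℂ, ‖w‖ < 1 → Q1.eval w ≠ 0 := by
        intro w hw h
        apply hQ w hw
        rw [hQ1eq, Polynomial.eval_mul, h, mul_zero]
      have hXz : (Polynomial.X - Polynomial.C z) ≠ 0 := Polynomial.X_sub_C_ne_zero z
      have hQ1nz : Q1 ≠ 0 := by
        intro h
        exact hQ1ne 0 habs0 (by rw [h, Polynomial.eval_zero])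
      have hdeg1 : Q1.natDegree = n - 1 := by
        have := Polynomial.natDegree_mul hXz hQ1nz
        rw [← hQ1eq, Polynomial.natDegree_X_sub_C, hd] at this
        omega
      have hsub : ∀ Ω : ℝ, ((r:ℂ) * Complex.exp ((Ω:ℂ) * Complex.I) - z) ≠ 0 := by
        intro Ω h
        have heq : (r:ℂ) * Complex.exp ((Ω:ℂ) * Complex.I) = z := by linear_combination h
        rw [← heq] at hz1
        have := hcirc Ω
        linarith
      have hpt : ∀ Ω : ℝ,
          Real.log (‖Q.eval ((r:ℂ) * Complex.exp ((Ω:ℂ) * Complex.I))‖)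
          = Real.log (‖(r:ℂ) * Complex.exp ((Ω:ℂ) * Complex.I) - z‖)
            + Real.log (‖Q1.eval ((r:ℂ) * Complex.exp ((Ω:ℂ) * Complex.I))‖) := by
        intro Ω
        rw [hQ1eq, Polynomial.eval_mul, norm_mul]
        rw [Real.log_mul (norm_ne_zero_iff.mpr (by simpa using hsub Ω))
          (norm_ne_zero_iff.mpr (hQ1ne _ (hcirc Ω)))]
        simp
      have hcont1 : Continuous fun Ω : ℝ =>
          Real.log (‖(r:ℂ) * Complex.exp ((Ω:ℂ) * Complex.I) - z‖) := by
        apply Continuous.log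
        · exact continuous_norm.comp (by fun_prop)
        · exact fun Ω => norm_ne_zero_iff.mpr (hsub Ω)
      have hcont2 : Continuous fun Ω : ℝ =>
          Real.log (‖Q1.eval ((r:ℂ) * Complex.exp ((Ω:ℂ) * Complex.I))‖) := by
        apply Continuous.log
        · apply continuous_norm.comp
          exact Q1.continuous_aeval.comp (by fun_prop)
        · exact fun Ω => norm_ne_zero_iff.mpr (hQ1ne _ (hcirc Ω))
      rw [intervalIntegral.integral_congr (fun Ω _ => hpt Ω),
        intervalIntegral.integral_add (hcont1.intervalIntegrable _ _)
          (hcont2.intervalIntegrable _ _),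
        integral_log_abs_circle_sub r hr0 z (lt_of_lt_of_le hr1 hz1),
        ih (n-1) (by omega) Q1 hQ1ne hdeg1]
      have h0 : ‖Q.eval 0‖ = ‖z‖ * ‖Q1.eval 0‖ := by
        rw [hQ1eq, Polynomial.eval_mul, norm_mul]
        simp
      rw [h0, Real.log_mul (norm_ne_zero_iff.mpr hz0)
        (norm_ne_zero_iff.mpr (hQ1ne 0 habs0))]
      ring

/-- Bode-like sensitivity integral, discrete time:
`lim_{ε→1⁺} ∫₀^{2π} ln|S̃(ε e^{iΩ})| dΩ
  = 2π ln(2+2ω_bT) − 2π ln(2+2ω_bT+ω_bω_cLT)`. -/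
theorem stmt6
    (T ωb ωc L : ℝ) (hT : 0 < T) (hωb : 0 < ωb) (hωc : 0 < ωc) (hL : 0 < L)
    (K : ℕ) (p : ℕ → ℝ)
    (Φ : ℂ → ℂ)
    (hΦ : ∀ z : ℂ, Φ z = ∑ k ∈ Finset.Icc 1 K, (p k : ℂ) * z ^ (-(k : ℤ)))
    (Γ : ℂ → ℂ)
    (hΓ : ∀ z : ℂ, Γ z = ((ωc : ℂ) * (L : ℂ) / 2) * ((1 + Φ z) / (1 - Φ z))
        * ((ωb : ℂ) * (T : ℂ) * z / ((1 + (ωb : ℂ) * (T : ℂ)) * z - 1)))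
    (S : ℂ → ℂ) (hS : ∀ z : ℂ, S z = 1 / (1 + Γ z))
    (hpole : ∀ z : ℂ, 1 < ‖z‖ → 1 - Φ z ≠ 0 ∧ 1 + Γ z ≠ 0) :
    Tendsto (fun ε : ℝ =>
        ∫ Ω in (0 : ℝ)..(2 * π),
          Real.log ‖S ((ε : ℂ) * Complex.exp ((Ω : ℂ) * Complex.I))‖)
      (𝓝[>] 1)
      (𝓝 (2 * π * Real.log (2 + 2 * ωb * T)
            - 2 * π * Real.log (2 + 2 * ωb * T + ωb * ωc * L * T))) := by
  set B : ℝ := ωb * T with hB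
  set Cc : ℝ := (ωc * L / 2) * B with hCc
  have hBpos : 0 < B := by positivity
  have hCpos : 0 < Cc := by positivity
  -- polynomials
  set Pq : Polynomial ℂ := ∑ k ∈ Finset.Icc 1 K, Polynomial.C ((p k : ℝ) : ℂ) * Polynomial.X ^ k
    with hPq
  set Dq : Polynomial ℂ := (1 - Pq) * (Polynomial.C (1 + (B : ℂ)) - Polynomial.X) with hDq
  set Nq : Polynomial ℂ := Dq + Polynomial.C ((Cc : ℝ) : ℂ) * (1 + Pq) with hNq
  have hPeval : ∀ w : ℂ, Pq.eval w = ∑ k ∈ Finset.Icc 1 K, ((p k : ℝ) : ℂ) * w ^ k := by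
    intro w
    rw [hPq, Polynomial.eval_finset_sum]
    simp
  have hDeval : ∀ w : ℂ, Dq.eval w = (1 - Pq.eval w) * ((1 + (B : ℂ)) - w) := by
    intro w
    rw [hDq]
    simp
  have hNeval : ∀ w : ℂ, Nq.eval w = Dq.eval w + ((Cc : ℝ) : ℂ) * (1 + Pq.eval w) := by
    intro w
    rw [hNq]
    simp
  have hPzero : Pq.eval 0 = 0 := by
    rw [hPeval]
    apply Finset.sum_eq_zero
    intro k hk
    have hk1 : 1 ≤ k := (Finset.mem_Icc.mp hk).1
    rw [zero_pow (by omega), mul_zero]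
  -- Φ at inverse points
  have hΦinv : ∀ w : ℂ, Φ w⁻¹ = Pq.eval w := by
    intro w
    rw [hΦ, hPeval]
    congr 1
    ext k
    congr 1
    rw [zpow_neg, inv_zpow, inv_inv, zpow_natCast]
  -- basic nonvanishing inside the ball
  have h1B : (0:ℝ) < 1 + B := by linarith
  have hfrac : ∀ w : ℂ, ‖w‖ < 1 → (1 + (B:ℂ)) - w ≠ 0 := by
    intro w hw h
    have hwe : w = 1 + (B:ℂ) := by linear_combination -h
    rw [hwe] at hw
    have : ‖1 + (B:ℂ)‖ = 1 + B := by
      rw [show (1 + (B:ℂ)) = ((1 + B : ℝ) : ℂ) by push_cast; ring, Complex.norm_real, Real.norm_eq_abs,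
        _root_.abs_of_pos h1B]
    rw [this] at hw
    linarith
  have hPne : ∀ w : ℂ, ‖w‖ < 1 → 1 - Pq.eval w ≠ 0 := by
    intro w hw
    rcases eq_or_ne w 0 with rfl | hw0
    · rw [hPzero]
      norm_num
    · rw [← hΦinv]
      have habsinv : 1 < ‖w⁻¹‖ := by
        rw [norm_inv]
        rw [one_lt_inv_iff₀]
        exact ⟨norm_pos_iff.mpr hw0, hw⟩
      exact (hpole _ habsinv).1
  have hDne : ∀ w : ℂ, ‖w‖ < 1 → Dq.eval w ≠ 0 := by
    intro w hw
    rw [hDeval]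
    exact mul_ne_zero (hPne w hw) (hfrac w hw)
  -- key identity : Nq.eval w = (1 + Γ w⁻¹) * Dq.eval w   for 0 < |w| < 1
  have hkey : ∀ w : ℂ, w ≠ 0 → ‖w‖ < 1 →
      Nq.eval w = (1 + Γ w⁻¹) * Dq.eval w := by
    intro w hw0 hw
    have hBC : ((B:ℝ):ℂ) = (ωb:ℂ) * (T:ℂ) := by rw [hB]; push_cast; ring
    have hCcC : ((Cc:ℝ):ℂ) = (ωc:ℂ) * (L:ℂ) / 2 * ((ωb:ℂ) * (T:ℂ)) := by
      rw [hCc, hB]; push_cast; ring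
    have h2 : (1 + (ωb:ℂ) * (T:ℂ) - w) ≠ 0 := by
      rw [show (1 + (ωb:ℂ) * (T:ℂ) - w) = (1 + ((B:ℝ):ℂ)) - w by rw [hBC]]
      exact hfrac w hw
    have h3 : (1 + (ωb:ℂ) * (T:ℂ)) * w⁻¹ - 1 ≠ 0 := by
      rw [show (1 + (ωb:ℂ) * (T:ℂ)) * w⁻¹ - 1 = (1 + (ωb:ℂ) * (T:ℂ) - w) * w⁻¹ by
        field_simp]
      exact mul_ne_zero h2 (inv_ne_zero hw0)
    rw [hΓ, hΦinv, hNeval, hDeval, hCcC,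
      show (1 + ((B:ℝ):ℂ)) - w = 1 + (ωb:ℂ) * (T:ℂ) - w by rw [hBC]]
    field_simp [hPne w hw, h2, h3]
  have hNne : ∀ w : ℂ, ‖w‖ < 1 → Nq.eval w ≠ 0 := by
    intro w hw
    rcases eq_or_ne w 0 with rfl | hw0
    · rw [hNeval, hDeval, hPzero]
      have : ((1:ℂ) - 0) * (1 + (B:ℂ) - 0) + ((Cc:ℝ):ℂ) * (1 + 0)
          = (((1 + B + Cc : ℝ)) : ℂ) := by push_cast; ring
      rw [this]
      rw [Ne, Complex.ofReal_eq_zero]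
      linarith
    · have habsinv : 1 < ‖w⁻¹‖ := by
        rw [norm_inv, one_lt_inv_iff₀]
        exact ⟨norm_pos_iff.mpr hw0, hw⟩
      rw [hkey w hw0 hw]
      exact mul_ne_zero (hpole _ habsinv).2 (hDne w hw)
  -- conjugation identities
  have hPconj : ∀ u : ℂ, Pq.eval ((starRingEnd ℂ) u) = (starRingEnd ℂ) (Pq.eval u) := by
    intro u
    rw [hPeval, hPeval, map_sum]
    refine Finset.sum_congr rfl fun k _ => ?_
    rw [map_mul, map_pow, Complex.conj_ofReal]
  have hDconj : ∀ u : ℂ, Dq.eval ((starRingEnd ℂ) u) = (starRingEnd ℂ) (Dq.eval u) := by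
    intro u
    rw [hDeval, hDeval, hPconj]
    rw [map_mul, map_sub, map_sub, map_add, map_one, Complex.conj_ofReal]
  have hNconj : ∀ u : ℂ, Nq.eval ((starRingEnd ℂ) u) = (starRingEnd ℂ) (Nq.eval u) := by
    intro u
    rw [hNeval, hNeval, hDconj, hPconj]
    rw [map_add, map_mul, map_add, map_one, Complex.conj_ofReal]
  -- constants
  have hD0 : ‖Dq.eval 0‖ = 1 + B := by
    rw [hDeval, hPzero]
    rw [show ((1:ℂ) - 0) * (1 + (B:ℂ) - 0) = (((1 + B : ℝ)) : ℂ) by push_cast; ring]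
    rw [Complex.norm_real, Real.norm_eq_abs, _root_.abs_of_pos h1B]
  have hN0 : ‖Nq.eval 0‖ = 1 + B + Cc := by
    rw [hNeval, hDeval, hPzero]
    rw [show ((1:ℂ) - 0) * (1 + (B:ℂ) - 0) + ((Cc:ℝ):ℂ) * (1 + 0)
        = (((1 + B + Cc : ℝ)) : ℂ) by push_cast; ring]
    rw [Complex.norm_real, Real.norm_eq_abs, _root_.abs_of_pos (by linarith)]
  -- the value of the integral for every ε > 1
  have hval : ∀ ε : ℝ, 1 < ε →
      (∫ Ω in (0:ℝ)..(2*π),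
          Real.log (‖S ((ε:ℂ) * Complex.exp ((Ω:ℂ) * Complex.I))‖))
      = 2 * π * Real.log (2 + 2 * ωb * T)
        - 2 * π * Real.log (2 + 2 * ωb * T + ωb * ωc * L * T) := by
    intro ε hε
    have hε0 : (0:ℝ) < ε := lt_trans one_pos hε
    set r : ℝ := ε⁻¹ with hr
    have hr0 : 0 < r := inv_pos.mpr hε0
    have hr1 : r < 1 := by
      rw [hr]
      exact inv_lt_one_of_one_lt₀ hε
    have hpt : ∀ Ω : ℝ,
        Real.log (‖S ((ε:ℂ) * Complex.exp ((Ω:ℂ) * Complex.I))‖)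
        = Real.log (‖Dq.eval ((r:ℂ) * Complex.exp ((Ω:ℂ) * Complex.I))‖)
          - Real.log (‖Nq.eval ((r:ℂ) * Complex.exp ((Ω:ℂ) * Complex.I))‖) := by
      intro Ω
      set z : ℂ := (ε:ℂ) * Complex.exp ((Ω:ℂ) * Complex.I) with hzdef
      have hzabs : ‖z‖ = ε := abs_circle ε Ω hε0.le
      have hz1 : 1 < ‖z‖ := by rw [hzabs]; exact hε
      have hz0 : z ≠ 0 := by
        intro h
        rw [h, norm_zero] at hzabs
        linarith
      set w : ℂ := z⁻¹ with hwdef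
      have hw0 : w ≠ 0 := inv_ne_zero hz0
      have hwabs : ‖w‖ < 1 := by
        rw [hwdef, norm_inv, hzabs]
        exact inv_lt_one_of_one_lt₀ hε
      have hconj : (starRingEnd ℂ) w = (r:ℂ) * Complex.exp ((Ω:ℂ) * Complex.I) := by
        rw [hwdef, hzdef, mul_inv, ← Complex.exp_neg, map_mul, ← Complex.exp_conj]
        rw [map_inv₀, Complex.conj_ofReal, map_neg, map_mul, Complex.conj_ofReal, Complex.conj_I]
        rw [hr]
        push_cast
        ring_nf
      have hkz : Nq.eval w = (1 + Γ z) * Dq.eval w := by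
        have h := hkey w hw0 hwabs
        rwa [show w⁻¹ = z by rw [hwdef, inv_inv]] at h
      have hA : (1 : ℂ) + Γ z ≠ 0 := (hpole z hz1).2
      have hSabs : ‖S z‖ = ‖Dq.eval w‖ / ‖Nq.eval w‖ := by
        rw [hS, hkz, norm_div, norm_one, norm_mul]
        rw [div_mul_eq_div_div_swap, div_self (norm_ne_zero_iff.mpr (hDne w hwabs))]
      have habsD : ‖Dq.eval ((r:ℂ) * Complex.exp ((Ω:ℂ) * Complex.I))‖
          = ‖Dq.eval w‖ := by
        rw [← hconj, hDconj, Complex.norm_conj]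
      have habsN : ‖Nq.eval ((r:ℂ) * Complex.exp ((Ω:ℂ) * Complex.I))‖
          = ‖Nq.eval w‖ := by
        rw [← hconj, hNconj, Complex.norm_conj]
      rw [hSabs, habsD, habsN,
        Real.log_div (norm_ne_zero_iff.mpr (hDne w hwabs)) (norm_ne_zero_iff.mpr (hNne w hwabs))]
    have hcircabs : ∀ Ω : ℝ, ‖(r:ℂ) * Complex.exp ((Ω:ℂ) * Complex.I)‖ < 1 := by
      intro Ω
      rw [abs_circle r Ω hr0.le]
      exact hr1
    have hcontD : Continuous fun Ω : ℝ =>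
        Real.log (‖Dq.eval ((r:ℂ) * Complex.exp ((Ω:ℂ) * Complex.I))‖) := by
      apply Continuous.log
      · exact continuous_norm.comp (Dq.continuous_aeval.comp (by fun_prop))
      · exact fun Ω => norm_ne_zero_iff.mpr (hDne _ (hcircabs Ω))
    have hcontN : Continuous fun Ω : ℝ =>
        Real.log (‖Nq.eval ((r:ℂ) * Complex.exp ((Ω:ℂ) * Complex.I))‖) := by
      apply Continuous.log
      · exact continuous_norm.comp (Nq.continuous_aeval.comp (by fun_prop))
      · exact fun Ω => norm_ne_zero_iff.mpr (hNne _ (hcircabs Ω))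
    rw [intervalIntegral.integral_congr (fun Ω _ => hpt Ω),
      intervalIntegral.integral_sub (hcontD.intervalIntegrable _ _)
        (hcontN.intervalIntegrable _ _),
      integral_log_abs_poly Dq hDne r hr0 hr1,
      integral_log_abs_poly Nq hNne r hr0 hr1, hD0, hN0]
    rw [show (2 + 2 * ωb * T + ωb * ωc * L * T : ℝ) = 2 * (1 + B + Cc) by rw [hCc, hB]; ring,
      show (2 + 2 * ωb * T : ℝ) = 2 * (1 + B) by rw [hB]; ring,
      Real.log_mul two_ne_zero (ne_of_gt h1B),
      Real.log_mul two_ne_zero (by linarith)]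
    ring
  exact Tendsto.congr'
    (by filter_upwards [self_mem_nhdsWithin] with ε hε; exact (hval ε hε).symm)
    tendsto_const_nhds
end

section
/- Let T > 0 and let Φ(s) = Σ_{k=1}^K β_k · exp(−m_k·T·s) with real β_k not all zero and distinct positive integers m_k, and assume |Φ(iω)| ≤ 1 for every real ω. Let ω_b, ω_c, L > 0 and Γ(s) = (ω_c·L/2)·((1+Φ(s))/(1−Φ(s)))·(ω_b/(s+ω_b)). Fix 0 < ε < δ and set M = sup { |Φ(s)| : Re s = ε } (so M < 1). Then for every R > 2·(δ + ω_b) and every θ ∈ [−π/2, π/2], one has |Γ(δ + R·e^{iθ})| ≤ 2·ω_b·ω_c·L / ((1 − M)·R). -/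
open Complex Real Set

/-- With `M = sup{|Φ(s)| : Re s = ε} < 1`, for every `R > 2(δ+ω_b)` and
`θ ∈ [−π/2, π/2]`, `|Γ(δ + R e^{iθ})| ≤ 2 ω_b ω_c L / ((1−M) R)`. -/
theorem stmt11
    (T : ℝ) (hT : 0 < T)
    (K : ℕ) (hK : 1 ≤ K)
    (β : Fin K → ℝ) (hβ : ∃ k, β k ≠ 0)
    (m : Fin K → ℕ) (hm : ∀ k, 0 < m k) (hm_inj : Function.Injective m)
    (Φ : ℂ → ℂ)
    (hΦ : ∀ s : ℂ, Φ s = ∑ k : Fin K, (β k : ℂ) * Complex.exp (-((m k : ℂ) * (T : ℂ) * s)))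
    (hbound : ∀ ω : ℝ, ‖Φ (Complex.I * (ω : ℂ))‖ ≤ 1)
    (ωb ωc L : ℝ) (hωb : 0 < ωb) (hωc : 0 < ωc) (hL : 0 < L)
    (Γ : ℂ → ℂ)
    (hΓ : ∀ s : ℂ, Γ s = ((ωc : ℂ) * (L : ℂ) / 2) * ((1 + Φ s) / (1 - Φ s))
        * ((ωb : ℂ) / (s + (ωb : ℂ))))
    (ε δ : ℝ) (hε : 0 < ε) (hεδ : ε < δ)
    (M : ℝ) (hM : M = sSup {x : ℝ | ∃ s : ℂ, s.re = ε ∧ x = ‖Φ s‖}) :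
    ∀ R : ℝ, 2 * (δ + ωb) < R → ∀ θ ∈ Set.Icc (-(π / 2)) (π / 2),
      ‖Γ ((δ : ℂ) + (R : ℂ) * Complex.exp ((θ : ℂ) * Complex.I))‖
        ≤ 2 * ωb * ωc * L / ((1 - M) * R) := by
  intro R hR θ hθ
  set r : ℝ := Real.exp (-(T * ε)) with hr
  have hr0 : 0 < r := Real.exp_pos _
  have hr1 : r < 1 := by
    rw [hr]; apply Real.exp_lt_one_iff.mpr; nlinarith
  set P : ℂ → ℂ := fun z => ∑ k : Fin K, (β k : ℂ) * z ^ (m k) with hP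
  set Q : ℂ → ℂ := fun z => ∑ k : Fin K, (β k : ℂ) * z ^ (m k - 1) with hQ
  have hPQ : ∀ z : ℂ, P z = z * Q z := by
    intro z
    rw [hP, hQ]
    simp only [Finset.mul_sum]
    refine Finset.sum_congr rfl fun k _ => ?_
    have h1 : z ^ (m k) = z * z ^ (m k - 1) := by
      rw [← pow_succ']
      congr 1
      have := hm k
      omega
    rw [h1]; ring
  have hΦP : ∀ s : ℂ, Φ s = P (Complex.exp (-(T * s))) := by
    intro s
    rw [hΦ, hP]
    refine Finset.sum_congr rfl fun k _ => ?_
    rw [← Complex.exp_nat_mul]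
    ring_nf
  have habs_exp : ∀ s : ℂ, ‖Complex.exp (-(T * s))‖ = Real.exp (-(T * s.re)) := by
    intro s
    rw [Complex.norm_exp]
    congr 1
    simp [Complex.mul_re]
  -- Q is bounded by 1 on the closed unit ball
  have hQdiff : Differentiable ℂ Q := by
    rw [hQ]
    exact Differentiable.fun_sum fun k _ => (differentiable_pow _).const_mul _
  have hPdiff : Differentiable ℂ P := by
    rw [hP]
    exact Differentiable.fun_sum fun k _ => (differentiable_pow _).const_mul _
  -- boundary bound for Q on unit circle
  have hQcirc : ∀ z : ℂ, ‖z‖ = 1 → ‖Q z‖ ≤ 1 := by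
    intro z hz
    have hz0 : z ≠ 0 := by intro h; rw [h] at hz; simp at hz
    set ω : ℝ := -(Complex.log z).im / T with hω
    have hre : (Complex.log z).re = 0 := by
      rw [Complex.log_re, hz, Real.log_one]
    have hexp : Complex.exp (-(T * (Complex.I * (ω : ℂ)))) = z := by
      have : -(T * (Complex.I * (ω : ℂ))) = Complex.log z := by
        apply Complex.ext
        · simp [hω, hre, Complex.mul_re, Complex.mul_im]
        · have hT' : (T : ℝ) ≠ 0 := ne_of_gt hT
          simp [hω, Complex.mul_re, Complex.mul_im]
          field_simp
      rw [this, Complex.exp_log hz0]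
    have h1 : ‖P z‖ ≤ 1 := by
      have := hbound ω
      rw [hΦP, hexp] at this
      exact this
    calc ‖Q z‖ = ‖z‖ * ‖Q z‖ := by rw [hz, one_mul]
      _ = ‖P z‖ := by rw [hPQ, norm_mul]
      _ ≤ 1 := h1
  have hQball : ∀ z : ℂ, ‖z‖ ≤ 1 → ‖Q z‖ ≤ 1 := by
    intro z hz
    have := Complex.norm_le_of_forall_mem_frontier_norm_le (U := Metric.ball (0:ℂ) 1)
      (z := z) (C := 1) Metric.isBounded_ball (hQdiff.diffContOnCl) ?_ ?_
    · simpa using this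
    · intro w hw
      rw [frontier_ball (0:ℂ) one_ne_zero] at hw
      exact hQcirc w (by simpa [Complex.dist_eq] using hw)
    · rw [closure_ball (0:ℂ) one_ne_zero]
      simpa [Complex.dist_eq] using hz
  -- the set defining M
  set S : Set ℝ := {x : ℝ | ∃ s : ℂ, s.re = ε ∧ x = ‖Φ s‖} with hS
  have hSub : ∀ x ∈ S, x ≤ r := by
    rintro x ⟨s, hs, rfl⟩
    rw [hΦP, hPQ, norm_mul, habs_exp, hs]
    calc Real.exp (-(T*ε)) * ‖Q (Complex.exp (-(T*s)))‖
        ≤ r * 1 := by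
          apply mul_le_mul_of_nonneg_left _ (le_of_lt hr0)
          exact hQball _ (by rw [habs_exp, hs]; exact le_of_lt hr1)
      _ = r := mul_one r
  have hSne : S.Nonempty := ⟨‖Φ (ε : ℂ)‖, (ε : ℂ), by simp, rfl⟩
  have hSbdd : BddAbove S := ⟨r, hSub⟩
  have hMr : M ≤ r := by rw [hM]; exact csSup_le hSne hSub
  -- P bounded by M on closed ball of radius r
  have hPcirc : ∀ z : ℂ, ‖z‖ = r → ‖P z‖ ≤ M := by
    intro z hz
    have hz0 : z ≠ 0 := by
      intro h; rw [h, norm_zero] at hz; exact hr0.ne hz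
    set s : ℂ := -(Complex.log z) / T with hs
    have hexp : Complex.exp (-(T * s)) = z := by
      have hT0 : (T : ℂ) ≠ 0 := by
        simpa using (Complex.ofReal_ne_zero.mpr (ne_of_gt hT))
      have : -(T * s) = Complex.log z := by
        rw [hs]; field_simp
      rw [this, Complex.exp_log hz0]
    have hsre : s.re = ε := by
      have : (Complex.log z).re = -(T * ε) := by
        rw [Complex.log_re, hz, hr, Real.log_exp]
      rw [hs]
      rw [Complex.div_re]
      simp [Complex.neg_re, Complex.neg_im, this, Complex.normSq_ofReal]
      field_simp
    have hmem : ‖P z‖ ∈ S := by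
      refine ⟨s, hsre, ?_⟩
      rw [hΦP, hexp]
    rw [hM]
    exact le_csSup hSbdd hmem
  have hPball : ∀ z : ℂ, ‖z‖ ≤ r → ‖P z‖ ≤ M := by
    intro z hz
    have := Complex.norm_le_of_forall_mem_frontier_norm_le (U := Metric.ball (0:ℂ) r)
      (z := z) (C := M) Metric.isBounded_ball (hPdiff.diffContOnCl) ?_ ?_
    · simpa using this
    · intro w hw
      rw [frontier_ball (0:ℂ) (ne_of_gt hr0)] at hw
      exact hPcirc w (by simpa [Complex.dist_eq] using hw)
    · rw [closure_ball (0:ℂ) (ne_of_gt hr0)]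
      simpa [Complex.dist_eq] using hz
  -- now the main point
  set s₀ : ℂ := (δ : ℂ) + (R : ℂ) * Complex.exp ((θ : ℂ) * Complex.I) with hs₀
  have hRpos : 0 < R := by nlinarith
  have hcos : 0 ≤ Real.cos θ := Real.cos_nonneg_of_mem_Icc hθ
  have hs₀re : s₀.re = δ + R * Real.cos θ := by
    rw [hs₀]
    simp [Complex.exp_ofReal_mul_I_re, Complex.add_re, Complex.mul_re]
  have hs₀re' : δ ≤ s₀.re := by
    rw [hs₀re]; nlinarith
  have hΦs₀ : ‖Φ s₀‖ ≤ M := by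
    rw [hΦP]
    apply hPball
    rw [habs_exp]
    rw [hr]
    apply Real.exp_le_exp.mpr
    nlinarith
  have hM1 : M < 1 := lt_of_le_of_lt hMr hr1
  have hM0 : 0 ≤ M := le_trans (norm_nonneg _) hΦs₀
  -- denominator bound
  have habs_exp_θ : ‖Complex.exp ((θ : ℂ) * Complex.I)‖ = 1 := by
    rw [Complex.norm_exp]
    simp [Complex.mul_re]
  have hden : R / 2 ≤ ‖s₀ + (ωb : ℂ)‖ := by
    have h1 : ‖(R : ℂ) * Complex.exp ((θ : ℂ) * Complex.I)‖ = R := by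
      rw [norm_mul, habs_exp_θ, mul_one, Complex.norm_real, Real.norm_eq_abs, abs_of_pos hRpos]
    have h2 : ‖(δ : ℂ) + (ωb : ℂ)‖ = δ + ωb := by
      rw [← Complex.ofReal_add, Complex.norm_real, Real.norm_eq_abs]
      exact abs_of_pos (by nlinarith)
    have heq : s₀ + (ωb : ℂ) = (R : ℂ) * Complex.exp ((θ : ℂ) * Complex.I) + ((δ:ℂ) + (ωb:ℂ)) := by
      rw [hs₀]; ring
    have hx : (R : ℂ) * Complex.exp ((θ : ℂ) * Complex.I)
        = ((R : ℂ) * Complex.exp ((θ : ℂ) * Complex.I) + ((δ:ℂ) + (ωb:ℂ))) + (-((δ:ℂ) + (ωb:ℂ))) := by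
      ring
    have h3 := norm_add_le
      ((R : ℂ) * Complex.exp ((θ : ℂ) * Complex.I) + ((δ:ℂ) + (ωb:ℂ))) (-((δ:ℂ) + (ωb:ℂ)))
    rw [← hx, h1, norm_neg, h2] at h3
    rw [heq]
    linarith
  have hnum : ‖1 + Φ s₀‖ ≤ 2 := by
    calc ‖1 + Φ s₀‖ ≤ ‖1‖ + ‖Φ s₀‖ := norm_add_le _ _
      _ ≤ 1 + M := by rw [norm_one]; linarith
      _ ≤ 2 := by linarith
  have hden2 : 1 - M ≤ ‖1 - Φ s₀‖ := by
    have h := norm_add_le (1 - Φ s₀) (Φ s₀)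
    rw [sub_add_cancel, norm_one] at h
    linarith
  have h1M : 0 < 1 - M := by linarith
  have habsΓ : ‖Γ s₀‖ = (ωc * L / 2) * (‖1 + Φ s₀‖ / ‖1 - Φ s₀‖) * (ωb / ‖s₀ + (ωb : ℂ)‖) := by
    rw [hΓ]
    simp only [norm_mul, norm_div, Complex.norm_real, Real.norm_eq_abs, Complex.norm_two]
    rw [abs_of_pos hωc, abs_of_pos hL, abs_of_pos hωb]
  rw [habsΓ]
  have hR2 : 0 < R / 2 := by linarith
  calc (ωc * L / 2) * (‖1 + Φ s₀‖ / ‖1 - Φ s₀‖) * (ωb / ‖s₀ + (ωb : ℂ)‖)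
      ≤ (ωc * L / 2) * (2 / (1 - M)) * (ωb / (R / 2)) := by
        gcongr
        all_goals positivity
      _ = 2 * ωb * ωc * L / ((1 - M) * R) := by
        field_simp
end

section
/- Let T > 0 and let Φ(s) = Σ_{k=1}^K β_k · exp(−m_k·T·s) with real β_k not all zero and distinct positive integers m_k, and assume |Φ(iω)| ≤ 1 for every real ω. Let ω_b, ω_c, L > 0 and Γ(s) = (ω_c·L/2)·((1+Φ(s))/(1−Φ(s)))·(ω_b/(s+ω_b)). Then for every fixed δ > 0, lim_{R→∞} ∫_{−π/2}^{π/2} Γ(δ + R·e^{iθ})·R·e^{iθ} dθ = π·ω_b·ω_c·L/2. -/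
open Complex Real Filter Set Topology intervalIntegral

lemma auxDiff13 (T : ℝ) (K : ℕ) (β : Fin K → ℝ) (m : Fin K → ℕ)
    (Φ : ℂ → ℂ)
    (hΦ : ∀ s : ℂ, Φ s = ∑ k : Fin K, (β k : ℂ) * Complex.exp (-((m k : ℂ) * (T : ℂ) * s))) :
    Differentiable ℂ Φ := by
  have : Φ = fun s => ∑ k : Fin K, (β k : ℂ) * Complex.exp (-((m k : ℂ) * (T : ℂ) * s)) :=
    funext hΦ
  rw [this]
  apply Differentiable.fun_sum
  intro k _
  exact (differentiable_const _).mul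
    ((differentiable_id.const_mul ((m k : ℂ) * (T : ℂ))).neg.cexp)

lemma auxPL13 (T : ℝ) (hT : 0 < T) (K : ℕ) (β : Fin K → ℝ)
    (m : Fin K → ℕ) (hm : ∀ k, 0 < m k)
    (Φ : ℂ → ℂ)
    (hΦ : ∀ s : ℂ, Φ s = ∑ k : Fin K, (β k : ℂ) * Complex.exp (-((m k : ℂ) * (T : ℂ) * s)))
    (hbound : ∀ ω : ℝ, ‖Φ (Complex.I * (ω : ℂ))‖ ≤ 1) :
    ∀ z : ℂ, 0 ≤ z.re → ‖Φ z‖ ≤ Real.exp (-(T * z.re)) := by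
  set f : ℂ → ℂ := fun z => Complex.exp ((T : ℂ) * z) * Φ z with hf
  have hΦd : Differentiable ℂ Φ := auxDiff13 T K β m Φ hΦ
  have hfd : Differentiable ℂ f := ((differentiable_id.const_mul (T : ℂ)).cexp).mul hΦd
  have hnorm : ∀ z : ℂ, ‖f z‖ = Real.exp (T * z.re) * ‖Φ z‖ := by
    intro z
    rw [hf]
    simp only [norm_mul, Complex.norm_exp, Complex.re_ofReal_mul]
  have hΦnorm : ∀ z : ℂ, ‖Φ z‖ ≤ ∑ k, |β k| * Real.exp (-((m k : ℝ) * T * z.re)) := by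
    intro z
    rw [hΦ]
    refine (norm_sum_le _ _).trans (Finset.sum_le_sum fun k _ => ?_)
    rw [norm_mul, Complex.norm_exp]
    have h1 : ((-((m k : ℂ) * (T : ℂ) * z)).re) = -((m k : ℝ) * T * z.re) := by
      have : ((m k : ℂ) * (T : ℂ)) = (((m k : ℝ) * T : ℝ) : ℂ) := by push_cast; ring
      rw [Complex.neg_re, this, Complex.re_ofReal_mul]
    rw [h1]
    simp
  have hM : ∀ z : ℂ, 0 ≤ z.re → ‖f z‖ ≤ ∑ k, |β k| := by
    intro z hz
    rw [hnorm]
    calc Real.exp (T * z.re) * ‖Φ z‖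
        ≤ Real.exp (T * z.re) * ∑ k, |β k| * Real.exp (-((m k : ℝ) * T * z.re)) := by
          exact mul_le_mul_of_nonneg_left (hΦnorm z) (Real.exp_pos _).le
      _ = ∑ k, |β k| * Real.exp (T * z.re + -((m k : ℝ) * T * z.re)) := by
          rw [Finset.mul_sum]
          refine Finset.sum_congr rfl fun k _ => ?_
          rw [Real.exp_add]; ring
      _ ≤ ∑ k, |β k| := by
          refine Finset.sum_le_sum fun k _ => ?_
          have h2 : (1 : ℝ) ≤ (m k : ℝ) := by exact_mod_cast hm k
          have h1 : T * z.re + -((m k : ℝ) * T * z.re) ≤ 0 := by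
            nlinarith [mul_nonneg hT.le hz]
          calc |β k| * Real.exp (T * z.re + -((m k : ℝ) * T * z.re))
              ≤ |β k| * 1 := mul_le_mul_of_nonneg_left
                (Real.exp_le_one_iff.mpr h1) (abs_nonneg _)
            _ = |β k| := mul_one _
  have key : ∀ z : ℂ, 0 ≤ z.re → ‖f z‖ ≤ 1 := by
    intro z hz
    refine PhragmenLindelof.right_half_plane_of_bounded_on_real hfd.diffContOnCl ?_ ?_ ?_ hz
    · refine ⟨1, one_lt_two, 0, Asymptotics.IsBigO.of_bound (∑ k, |β k|) ?_⟩
      refine Filter.eventually_inf_principal.2 (Filter.Eventually.of_forall fun z hz => ?_)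
      simpa using hM z (le_of_lt hz)
    · refine ⟨∑ k, |β k|, ?_⟩
      rw [Filter.eventually_map]
      filter_upwards [Filter.eventually_ge_atTop (0 : ℝ)] with x hx
      exact hM x (by simpa using hx)
    · intro x
      have h0 : ((x : ℂ) * Complex.I).re = 0 := by simp
      rw [hnorm, h0, mul_zero, Real.exp_zero, one_mul, mul_comm]
      exact hbound x
  intro z hz
  have h1 := key z hz
  rw [hnorm] at h1
  rw [Real.exp_neg]
  have hp : (0:ℝ) < Real.exp (T * z.re) := Real.exp_pos _
  calc ‖Φ z‖ = (Real.exp (T * z.re))⁻¹ * (Real.exp (T * z.re) * ‖Φ z‖) := by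
        field_simp
    _ ≤ (Real.exp (T * z.re))⁻¹ * 1 := by
        exact mul_le_mul_of_nonneg_left h1 (inv_nonneg.mpr hp.le)
    _ = (Real.exp (T * z.re))⁻¹ := mul_one _

/-- For fixed `δ > 0`,
`lim_{R→∞} ∫_{−π/2}^{π/2} Γ(δ + R e^{iθ})·R e^{iθ} dθ = π ω_b ω_c L / 2`. -/
theorem stmt13
    (T : ℝ) (hT : 0 < T)
    (K : ℕ) (hK : 1 ≤ K)
    (β : Fin K → ℝ) (hβ : ∃ k, β k ≠ 0)
    (m : Fin K → ℕ) (hm : ∀ k, 0 < m k) (hm_inj : Function.Injective m)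
    (Φ : ℂ → ℂ)
    (hΦ : ∀ s : ℂ, Φ s = ∑ k : Fin K, (β k : ℂ) * Complex.exp (-((m k : ℂ) * (T : ℂ) * s)))
    (hbound : ∀ ω : ℝ, ‖Φ (Complex.I * (ω : ℂ))‖ ≤ 1)
    (ωb ωc L : ℝ) (hωb : 0 < ωb) (hωc : 0 < ωc) (hL : 0 < L)
    (Γ : ℂ → ℂ)
    (hΓ : ∀ s : ℂ, Γ s = ((ωc : ℂ) * (L : ℂ) / 2) * ((1 + Φ s) / (1 - Φ s))
        * ((ωb : ℂ) / (s + (ωb : ℂ))))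
    (δ : ℝ) (hδ : 0 < δ) :
    Tendsto (fun R : ℝ =>
        ∫ θ in (-(π / 2))..(π / 2),
          Γ ((δ : ℂ) + (R : ℂ) * Complex.exp ((θ : ℂ) * Complex.I))
            * ((R : ℂ) * Complex.exp ((θ : ℂ) * Complex.I)))
      atTop (𝓝 ((π * ωb * ωc * L / 2 : ℝ) : ℂ)) := by
  have key := auxPL13 T hT K β m hm Φ hΦ hbound
  have hΦd : Differentiable ℂ Φ := auxDiff13 T K β m Φ hΦ
  set q : ℝ := Real.exp (-(T * δ)) with hqdef
  have hq0 : 0 < q := Real.exp_pos _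
  have hq1 : q < 1 := by
    rw [hqdef, show (1:ℝ) = Real.exp 0 by simp]
    exact Real.exp_lt_exp.mpr (by nlinarith)
  -- basic computations
  have hre : ∀ (R θ : ℝ), ((δ:ℂ) + (R:ℂ) * Complex.exp ((θ:ℂ) * Complex.I)).re
      = δ + R * Real.cos θ := by
    intro R θ
    simp [Complex.add_re, Complex.re_ofReal_mul, Complex.exp_ofReal_mul_I_re]
  have hnormRe : ∀ (R θ : ℝ), 0 ≤ R → ‖(R:ℂ) * Complex.exp ((θ:ℂ) * Complex.I)‖ = R := by
    intro R θ hR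
    rw [norm_mul, Complex.norm_exp]
    simp [_root_.abs_of_nonneg hR]
  have hcos : ∀ θ ∈ Set.Icc (-(π/2)) (π/2), 0 ≤ Real.cos θ := fun θ hθ =>
    Real.cos_nonneg_of_mem_Icc hθ
  have hΦq : ∀ (R θ : ℝ), 0 ≤ R → 0 ≤ Real.cos θ →
      ‖Φ ((δ:ℂ) + (R:ℂ) * Complex.exp ((θ:ℂ) * Complex.I))‖ ≤ q := by
    intro R θ hR hc
    refine (key _ (by rw [hre]; nlinarith [mul_nonneg hR hc])).trans ?_
    rw [hre, hqdef]
    apply Real.exp_le_exp.mpr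
    nlinarith [mul_nonneg hR hc]
  have hden : ∀ w : ℂ, ‖w‖ ≤ q → 1 - q ≤ ‖1 - w‖ := by
    intro w hw
    have h := norm_sub_norm_le (1:ℂ) w
    simp only [norm_one] at h
    linarith
  have hne : ∀ w : ℂ, ‖w‖ ≤ q → (1:ℂ) - w ≠ 0 := by
    intro w hw h
    have h2 := hden w hw
    rw [h, norm_zero] at h2; linarith
  have hz0 : ∀ z : ℂ, 0 < z.re → z ≠ 0 := by
    intro z h h0; rw [h0] at h; simp at h
  have hπ : -(π/2) ≤ (π/2 : ℝ) := by nlinarith [Real.pi_pos]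
  have hIoc : Set.uIoc (-(π/2)) (π/2 : ℝ) = Set.Ioc (-(π/2)) (π/2) := Set.uIoc_of_le hπ
  have hecont : Continuous (fun θ:ℝ => Complex.exp ((θ:ℂ) * Complex.I)) :=
    (Complex.continuous_ofReal.mul continuous_const).cexp
  have hCn : ‖((ωc:ℂ) * (L:ℂ) / 2)‖ = ωc * L / 2 := by
    rw [show ((ωc:ℂ) * (L:ℂ) / 2) = (((ωc * L / 2 : ℝ)):ℂ) by push_cast; ring,
      Complex.norm_real]
    exact _root_.abs_of_pos (by positivity)
  have hbn : ‖((ωb:ℂ))‖ = ωb := by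
    rw [Complex.norm_real]; exact _root_.abs_of_pos hωb
  have main : Tendsto (fun R : ℝ =>
      ∫ θ in (-(π / 2))..(π / 2),
        Γ ((δ : ℂ) + (R : ℂ) * Complex.exp ((θ : ℂ) * Complex.I))
          * ((R : ℂ) * Complex.exp ((θ : ℂ) * Complex.I)))
      atTop (𝓝 (∫ _θ in (-(π / 2))..(π / 2), ((ωc:ℂ) * (L:ℂ) / 2 * (ωb:ℂ)))) := by
    apply intervalIntegral.tendsto_integral_filter_of_dominated_convergence
      (bound := fun _ => (ωc * L / 2) * (2 / (1 - q)) * (2 * ωb))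
    · -- measurability
      filter_upwards [Filter.eventually_ge_atTop (0:ℝ)] with R hR
      apply ContinuousOn.aestronglyMeasurable ?_ measurableSet_uIoc
      have hScont : Continuous (fun θ:ℝ => (δ:ℂ) + (R:ℂ) * Complex.exp ((θ:ℂ) * Complex.I)) :=
        continuous_const.add (continuous_const.mul hecont)
      simp only [hΓ]
      apply ContinuousOn.mul
      · apply ContinuousOn.mul
        · apply ContinuousOn.mul continuousOn_const
          apply ContinuousOn.div
          · exact (continuous_const.add (hΦd.continuous.comp hScont)).continuousOn
          · exact (continuous_const.sub (hΦd.continuous.comp hScont)).continuousOn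
          · intro θ hθ
            rw [hIoc] at hθ
            exact hne _ (hΦq R θ hR (hcos θ (Set.Ioc_subset_Icc_self hθ)))
        · apply ContinuousOn.div continuousOn_const (hScont.add continuous_const).continuousOn
          intro θ hθ
          rw [hIoc] at hθ
          apply hz0
          simp only [Pi.add_apply]
          rw [Complex.add_re, hre, Complex.ofReal_re]
          nlinarith [hcos θ (Set.Ioc_subset_Icc_self hθ),
            mul_nonneg hR (hcos θ (Set.Ioc_subset_Icc_self hθ))]
      · exact (continuous_const.mul hecont).continuousOn
    · -- bound
      filter_upwards [Filter.eventually_ge_atTop (max 1 (2*(δ+ωb)))] with R hR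
      refine MeasureTheory.ae_of_all _ fun θ hθ => ?_
      rw [hIoc] at hθ
      have hθI := Set.Ioc_subset_Icc_self hθ
      have hR1 : (1:ℝ) ≤ R := le_trans (le_max_left _ _) hR
      have hR2 : 2*(δ+ωb) ≤ R := le_trans (le_max_right _ _) hR
      have hR0 : (0:ℝ) ≤ R := by linarith
      have hcosθ := hcos θ hθI
      have hΦz : ‖Φ ((δ:ℂ) + (R:ℂ) * Complex.exp ((θ:ℂ) * Complex.I))‖ ≤ q := hΦq R θ hR0 hcosθ
      set z : ℂ := (δ:ℂ) + (R:ℂ) * Complex.exp ((θ:ℂ) * Complex.I) with hz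
      have h1p : ‖1 + Φ z‖ ≤ 2 := by
        calc ‖1 + Φ z‖ ≤ ‖(1:ℂ)‖ + ‖Φ z‖ := norm_add_le _ _
          _ ≤ 1 + q := by rw [norm_one]; linarith
          _ ≤ 2 := by linarith
      have hzw : R - (δ+ωb) ≤ ‖z + (ωb:ℂ)‖ := by
        have h1 : ((R:ℂ) * Complex.exp ((θ:ℂ) * Complex.I)) = (z + (ωb:ℂ)) - (((δ+ωb:ℝ)):ℂ) := by
          rw [hz]; push_cast; ring
        have h3 := norm_sub_le (z + (ωb:ℂ)) ((((δ+ωb:ℝ)):ℂ))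
        rw [← h1, hnormRe R θ hR0] at h3
        have h4 : ‖(((δ+ωb:ℝ)):ℂ)‖ = δ + ωb := by
          rw [Complex.norm_real]; exact _root_.abs_of_pos (by positivity)
        rw [h4] at h3; linarith
      have hzw2 : R/2 ≤ ‖z + (ωb:ℂ)‖ := by linarith
      have hzwpos : (0:ℝ) < ‖z + (ωb:ℂ)‖ := by linarith
      rw [hΓ, norm_mul, norm_mul, norm_mul, hCn, norm_div, norm_div, hbn, hnormRe R θ hR0]
      have hd1 : ‖1 + Φ z‖ / ‖1 - Φ z‖ ≤ 2 / (1 - q) :=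
        div_le_div₀ (by norm_num) h1p (by linarith) (hden _ hΦz)
      have hd2 : ωb / ‖z + (ωb:ℂ)‖ * R ≤ 2 * ωb := by
        rw [div_mul_eq_mul_div, div_le_iff₀ hzwpos]
        nlinarith
      calc ωc * L / 2 * (‖1 + Φ z‖ / ‖1 - Φ z‖) * (ωb / ‖z + (ωb:ℂ)‖) * R
          = ωc * L / 2 * (‖1 + Φ z‖ / ‖1 - Φ z‖) * (ωb / ‖z + (ωb:ℂ)‖ * R) := by ring
        _ ≤ ωc * L / 2 * (2 / (1 - q)) * (2 * ωb) := by
            apply mul_le_mul (mul_le_mul_of_nonneg_left hd1 (by positivity)) hd2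
            · positivity
            · apply mul_nonneg (by positivity)
              apply div_nonneg (by norm_num) (by linarith)
    · exact intervalIntegrable_const
    · -- pointwise limit
      have hae : ∀ᵐ θ : ℝ, θ ≠ π/2 :=
        MeasureTheory.compl_mem_ae_iff.mpr (MeasureTheory.measure_singleton (π/2 : ℝ))
      filter_upwards [hae] with θ hθne hθI
      rw [hIoc] at hθI
      have hθoo : θ ∈ Set.Ioo (-(π/2)) (π/2) := ⟨hθI.1, lt_of_le_of_ne hθI.2 hθne⟩
      have hcosp : 0 < Real.cos θ := Real.cos_pos_of_mem_Ioo hθoo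
      -- Φ tends to 0 along the ray
      have hΦ0 : Tendsto (fun R:ℝ => Φ ((δ:ℂ) + (R:ℂ) * Complex.exp ((θ:ℂ) * Complex.I)))
          atTop (𝓝 0) := by
        apply squeeze_zero_norm'
          (a := fun R:ℝ => Real.exp (-(T * (δ + R * Real.cos θ))))
        · filter_upwards [Filter.eventually_ge_atTop (0:ℝ)] with R hR
          exact (key _ (by rw [hre]; nlinarith [mul_nonneg hR hcosp.le])).trans_eq
            (by rw [hre])
        · have h2 : Tendsto (fun R:ℝ => T * (δ + R * Real.cos θ)) atTop atTop := by
            apply Filter.Tendsto.const_mul_atTop hT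
            exact Filter.tendsto_atTop_add_const_left _ _
              (Filter.Tendsto.atTop_mul_const hcosp tendsto_id)
          exact Real.tendsto_exp_atBot.comp (Filter.tendsto_neg_atTop_atBot.comp h2)
      have hA : Tendsto (fun R:ℝ =>
          (1 + Φ ((δ:ℂ) + (R:ℂ) * Complex.exp ((θ:ℂ) * Complex.I))) /
          (1 - Φ ((δ:ℂ) + (R:ℂ) * Complex.exp ((θ:ℂ) * Complex.I)))) atTop (𝓝 1) := by
        have h := (tendsto_const_nhds (x := (1:ℂ)) (f := atTop)).add hΦ0 |>.div
          ((tendsto_const_nhds (x := (1:ℂ)) (f := atTop)).sub hΦ0) (by norm_num)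
        simpa [Pi.div_def] using h
      have hg : Tendsto (fun R:ℝ => ((δ:ℂ) + (ωb:ℂ)) / ((R:ℂ) * Complex.exp ((θ:ℂ) * Complex.I)))
          atTop (𝓝 0) := by
        apply squeeze_zero_norm' (a := fun R:ℝ => ‖(δ:ℂ) + (ωb:ℂ)‖ / R)
        · filter_upwards [Filter.eventually_ge_atTop (0:ℝ)] with R hR
          rw [norm_div, hnormRe R θ hR]
        · exact tendsto_const_nhds.div_atTop tendsto_id
      have hD : Tendsto (fun R:ℝ => (ωb:ℂ) * ((R:ℂ) * Complex.exp ((θ:ℂ) * Complex.I)) /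
          (((δ:ℂ) + (R:ℂ) * Complex.exp ((θ:ℂ) * Complex.I)) + (ωb:ℂ))) atTop (𝓝 (ωb:ℂ)) := by
        have h5 : Tendsto (fun R:ℝ => (ωb:ℂ) /
            (((δ:ℂ) + (ωb:ℂ)) / ((R:ℂ) * Complex.exp ((θ:ℂ) * Complex.I)) + 1))
            atTop (𝓝 (ωb:ℂ)) := by
          have h := (tendsto_const_nhds (x := ((ωb:ℂ))) (f := atTop)).div
            (hg.add (tendsto_const_nhds (x := (1:ℂ)))) (by norm_num)
          simpa [Pi.div_def] using h
        refine Filter.Tendsto.congr' ?_ h5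
        filter_upwards [Filter.eventually_gt_atTop (0:ℝ)] with R hR
        have hw : (R:ℂ) * Complex.exp ((θ:ℂ) * Complex.I) ≠ 0 :=
          mul_ne_zero (by exact_mod_cast hR.ne') (Complex.exp_ne_zero _)
        have hSne : ((δ:ℂ) + (R:ℂ) * Complex.exp ((θ:ℂ) * Complex.I)) + (ωb:ℂ) ≠ 0 := by
          apply hz0
          rw [Complex.add_re, hre, Complex.ofReal_re]
          nlinarith [mul_pos hR hcosp]
        have h6 : ((δ : ℂ) + (ωb : ℂ)) / ((R : ℂ) * Complex.exp ((θ : ℂ) * Complex.I)) + 1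
            = (((δ : ℂ) + (R : ℂ) * Complex.exp ((θ : ℂ) * Complex.I)) + (ωb : ℂ))
              / ((R : ℂ) * Complex.exp ((θ : ℂ) * Complex.I)) := by
          rw [div_add' _ _ _ hw, div_eq_div_iff hw hw]
          ring
        rw [h6, div_div_eq_mul_div]
      have hfinal := ((tendsto_const_nhds (x := ((ωc:ℂ) * (L:ℂ) / 2)) (f := atTop)).mul hA).mul hD
      refine Filter.Tendsto.congr' ?_ (by simpa using hfinal)
      exact Filter.Eventually.of_forall fun R => by simp only [hΓ]; ring
  have hval : (∫ _θ in (-(π / 2))..(π / 2), ((ωc:ℂ) * (L:ℂ) / 2 * (ωb:ℂ)))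
      = ((π * ωb * ωc * L / 2 : ℝ) : ℂ) := by
    rw [intervalIntegral.integral_const, show (π/2 - -(π/2)) = π by ring, Complex.real_smul]
    push_cast
    ring
  rw [← hval]
  exact main
end

section
/- Let T > 0 and let Φ(s) = Σ_{k=1}^K β_k · exp(−m_k·T·s) with real β_k not all zero and distinct positive integers m_k, and assume |Φ(iω)| ≤ 1 for every real ω. Let ω_b, ω_c, L > 0 and Γ(s) = (ω_c·L/2)·((1+Φ(s))/(1−Φ(s)))·(ω_b/(s+ω_b)). Then for every fixed δ > 0, lim_{R→∞} ∫_{−π/2}^{π/2} Log(1 + Γ(δ + R·e^{iθ}))·R·e^{iθ} dθ = π·ω_b·ω_c·L/2, where Log denotes the principal branch of the complex logarithm; in particular, for all sufficiently large R the integrand is well defined for every θ ∈ [−π/2, π/2] (since |Γ| < 1/2 on the arc). -/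
open Complex Real Filter Set Topology intervalIntegral
open MeasureTheory

set_option maxHeartbeats 1000000 in
/-- For fixed `δ > 0`,
`lim_{R→∞} ∫_{−π/2}^{π/2} Log(1 + Γ(δ + R e^{iθ}))·R e^{iθ} dθ = π ω_b ω_c L / 2`,
with `Log` the principal branch; in particular, for all sufficiently large `R`,
`|Γ| < 1/2` on the arc. -/
theorem stmt14
    (T : ℝ) (hT : 0 < T)
    (K : ℕ) (hK : 1 ≤ K)
    (β : Fin K → ℝ) (hβ : ∃ k, β k ≠ 0)
    (m : Fin K → ℕ) (hm : ∀ k, 0 < m k) (hm_inj : Function.Injective m)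
    (Φ : ℂ → ℂ)
    (hΦ : ∀ s : ℂ, Φ s = ∑ k : Fin K, (β k : ℂ) * Complex.exp (-((m k : ℂ) * (T : ℂ) * s)))
    (hbound : ∀ ω : ℝ, ‖Φ (Complex.I * (ω : ℂ))‖ ≤ 1)
    (ωb ωc L : ℝ) (hωb : 0 < ωb) (hωc : 0 < ωc) (hL : 0 < L)
    (Γ : ℂ → ℂ)
    (hΓ : ∀ s : ℂ, Γ s = ((ωc : ℂ) * (L : ℂ) / 2) * ((1 + Φ s) / (1 - Φ s))
        * ((ωb : ℂ) / (s + (ωb : ℂ))))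
    (δ : ℝ) (hδ : 0 < δ) :
    (∀ᶠ R : ℝ in atTop, ∀ θ ∈ Set.Icc (-(π / 2)) (π / 2),
      ‖Γ ((δ : ℂ) + (R : ℂ) * Complex.exp ((θ : ℂ) * Complex.I))‖ < 1 / 2) ∧
    Tendsto (fun R : ℝ =>
        ∫ θ in (-(π / 2))..(π / 2),
          Complex.log (1 + Γ ((δ : ℂ) + (R : ℂ) * Complex.exp ((θ : ℂ) * Complex.I)))
            * ((R : ℂ) * Complex.exp ((θ : ℂ) * Complex.I)))
      atTop (𝓝 ((π * ωb * ωc * L / 2 : ℝ) : ℂ)) := by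
  -- Schwarz-lemma type bound for Φ on the right half plane
  have hΦb : ∀ s : ℂ, 0 ≤ s.re → ‖Φ s‖ ≤ Real.exp (-(T * s.re)) := by
    set G : ℂ → ℂ := fun z => ∑ k : Fin K, (β k : ℂ) * z ^ (m k - 1) with hG
    have hFG : ∀ z : ℂ, (∑ k : Fin K, (β k : ℂ) * z ^ (m k)) = z * G z := by
      intro z
      rw [hG, Finset.mul_sum]
      refine Finset.sum_congr rfl fun k _ => ?_
      have : z ^ m k = z * z ^ (m k - 1) := by
        conv_lhs => rw [← Nat.succ_pred_eq_of_pos (hm k)]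
        rw [pow_succ']
        rfl
      rw [this]; ring
    have hF_circle : ∀ z : ℂ, ‖z‖ = 1 → ‖∑ k : Fin K, (β k : ℂ) * z ^ (m k)‖ ≤ 1 := by
      intro z hz
      have hz' : ‖z‖ = 1 := hz
      have hzexp : Complex.exp ((Complex.arg z : ℂ) * Complex.I) = z := by
        have := Complex.norm_mul_exp_arg_mul_I z
        rwa [hz', Complex.ofReal_one, one_mul] at this
      set ω : ℝ := -(Complex.arg z) / T with hω
      have key : Φ (Complex.I * (ω : ℂ)) = ∑ k : Fin K, (β k : ℂ) * z ^ (m k) := by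
        rw [hΦ]
        refine Finset.sum_congr rfl fun k _ => ?_
        congr 1
        have harg : -((m k : ℂ) * (T : ℂ) * (Complex.I * (ω : ℂ)))
            = (m k : ℕ) * ((Complex.arg z : ℂ) * Complex.I) := by
          have hTne : (T:ℂ) ≠ 0 := Complex.ofReal_ne_zero.2 hT.ne'
          rw [hω]
          push_cast
          field_simp
        rw [harg, Complex.exp_nat_mul, hzexp]
      calc ‖∑ k : Fin K, (β k : ℂ) * z ^ (m k)‖ = ‖Φ (Complex.I * (ω : ℂ))‖ := by
            rw [key]
        _ ≤ 1 := hbound ω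
    have hGdiff : Differentiable ℂ G := by
      apply Differentiable.fun_sum
      intro k _
      exact (differentiable_pow _).const_mul _
    have hGle : ∀ z ∈ Metric.closedBall (0:ℂ) 1, ‖G z‖ ≤ 1 := by
      intro z hz
      have h1 : closure (Metric.ball (0:ℂ) 1) = Metric.closedBall 0 1 :=
        closure_ball 0 one_ne_zero
      refine Complex.norm_le_of_forall_mem_frontier_norm_le Metric.isBounded_ball
        hGdiff.diffContOnCl ?_ (h1 ▸ hz)
      intro w hw
      rw [frontier_ball 0 one_ne_zero, mem_sphere_zero_iff_norm] at hw
      have h2 : ‖w * G w‖ ≤ 1 := by rw [← hFG w]; exact hF_circle w hw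
      rwa [norm_mul, hw, one_mul] at h2
    intro s hs
    set z : ℂ := Complex.exp (-((T : ℂ) * s)) with hz
    have hz_abs : ‖z‖ = Real.exp (-(T * s.re)) := by
      rw [hz, Complex.norm_exp]
      congr 1
      simp [Complex.neg_re, Complex.mul_re, Complex.ofReal_re, Complex.ofReal_im]
    have hz_le : ‖z‖ ≤ 1 := by
      rw [hz_abs, Real.exp_le_one_iff]
      have : 0 ≤ T * s.re := mul_nonneg hT.le hs
      linarith
    have hΦz : Φ s = z * G z := by
      rw [hΦ, ← hFG z]
      refine Finset.sum_congr rfl fun k _ => ?_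
      congr 1
      rw [hz, ← Complex.exp_nat_mul]
      congr 1
      ring
    rw [hΦz, norm_mul]
    calc ‖z‖ * ‖G z‖ ≤ ‖z‖ * 1 := by
          refine mul_le_mul_of_nonneg_left ?_ (norm_nonneg _)
          exact hGle z (by rw [Metric.mem_closedBall, dist_zero_right]; exact hz_le)
      _ = Real.exp (-(T * s.re)) := by rw [mul_one, hz_abs]
  -- basic quantities
  set q : ℝ := Real.exp (-(T * δ)) with hqdef
  have hq1 : q < 1 := by
    rw [hqdef, Real.exp_lt_one_iff]
    nlinarith
  have hq0 : 0 < q := Real.exp_pos _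
  have h1mq : 0 < 1 - q := by linarith
  set B : ℝ := (ωc * L / 2) * ((1 + q) / (1 - q)) * ωb with hBdef
  have hB : 0 < B := by
    rw [hBdef]; positivity
  -- bounds on the closed half plane Re s ≥ δ
  have hΦδ : ∀ s : ℂ, δ ≤ s.re → ‖Φ s‖ ≤ q := by
    intro s hs
    refine (hΦb s (by linarith)).trans ?_
    rw [hqdef]
    apply Real.exp_le_exp.2
    nlinarith
  have hden : ∀ s : ℂ, δ ≤ s.re → s + (ωb:ℂ) ≠ 0 := by
    intro s hs h
    have h2 : (s + (ωb:ℂ)).re = 0 := by rw [h]; simp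
    simp only [Complex.add_re, Complex.ofReal_re] at h2
    linarith
  have h1Φ : ∀ s : ℂ, δ ≤ s.re → 1 - q ≤ ‖1 - Φ s‖ := by
    intro s hs
    have h := hΦδ s hs
    have h2 : ‖(1:ℂ)‖ - ‖Φ s‖ ≤ ‖1 - Φ s‖ := norm_sub_norm_le _ _
    rw [norm_one] at h2
    linarith
  have h1Φne : ∀ s : ℂ, δ ≤ s.re → (1:ℂ) - Φ s ≠ 0 := by
    intro s hs h
    have := h1Φ s hs
    rw [h, norm_zero] at this
    linarith
  have hΓb : ∀ s : ℂ, δ ≤ s.re → ‖Γ s‖ ≤ B / ‖s + (ωb:ℂ)‖ := by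
    intro s hs
    have hpos : 0 < ‖s + (ωb:ℂ)‖ := norm_pos_iff.2 (hden s hs)
    have e1 : ‖((ωc:ℂ) * (L:ℂ) / 2)‖ = ωc * L / 2 := by
      rw [show ((ωc:ℂ) * (L:ℂ) / 2) = ((ωc * L / 2 : ℝ) : ℂ) by push_cast; ring,
        Complex.norm_real, Real.norm_eq_abs]
      rw [abs_of_pos (by positivity : (0:ℝ) < ωc * L / 2)]
    have e2 : ‖((ωb:ℂ))‖ = ωb := by rw [Complex.norm_real, Real.norm_eq_abs, abs_of_pos hωb]
    rw [hΓ, norm_mul, norm_mul, e1, norm_div, norm_div, e2]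
    have h3 : ‖1 + Φ s‖ ≤ 1 + q := by
      refine (norm_add_le _ _).trans ?_
      rw [norm_one]
      linarith [hΦδ s hs]
    have h4 := h1Φ s hs
    have h5 : ‖1 + Φ s‖ / ‖1 - Φ s‖ ≤ (1 + q) / (1 - q) := by
      apply div_le_div₀ (by positivity) h3 h1mq h4
    calc ωc * L / 2 * (‖1 + Φ s‖ / ‖1 - Φ s‖) * (ωb / ‖s + (ωb:ℂ)‖)
        ≤ ωc * L / 2 * ((1 + q) / (1 - q)) * (ωb / ‖s + (ωb:ℂ)‖) := by
          apply mul_le_mul_of_nonneg_right _ (by positivity)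
          apply mul_le_mul_of_nonneg_left h5 (by positivity)
      _ = B / ‖s + (ωb:ℂ)‖ := by rw [hBdef]; ring
  -- geometry of the arc
  have hre : ∀ (R θ : ℝ), ((δ:ℂ) + (R:ℂ) * Complex.exp ((θ:ℂ) * Complex.I)).re
      = δ + R * Real.cos θ := by
    intro R θ
    simp [Complex.add_re, Complex.mul_re, Complex.ofReal_re, Complex.ofReal_im,
      Complex.exp_ofReal_mul_I_re]
  have hnorm_arc : ∀ (R θ : ℝ), 0 ≤ R → ‖(R:ℂ) * Complex.exp ((θ:ℂ) * Complex.I)‖ = R := by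
    intro R θ hR
    rw [norm_mul, Complex.norm_real, Complex.norm_exp_ofReal_mul_I,
      mul_one, Real.norm_eq_abs, _root_.abs_of_nonneg hR]
  have hωδ : ‖((δ:ℂ) + (ωb:ℂ))‖ = δ + ωb := by
    rw [← Complex.ofReal_add, Complex.norm_real, Real.norm_eq_abs,
      abs_of_pos (by positivity : (0:ℝ) < δ + ωb)]
  have hlow : ∀ (R θ : ℝ), 0 ≤ R →
      R - (δ + ωb) ≤ ‖(δ:ℂ) + (R:ℂ) * Complex.exp ((θ:ℂ) * Complex.I) + (ωb:ℂ)‖ := by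
    intro R θ hR
    have h1 : ((δ:ℂ) + (R:ℂ) * Complex.exp ((θ:ℂ) * Complex.I) + (ωb:ℂ))
        - ((δ:ℂ) + (ωb:ℂ)) = (R:ℂ) * Complex.exp ((θ:ℂ) * Complex.I) := by ring
    have h3 := norm_sub_le ((δ:ℂ) + (R:ℂ) * Complex.exp ((θ:ℂ) * Complex.I) + (ωb:ℂ))
      ((δ:ℂ) + (ωb:ℂ))
    rw [h1, hnorm_arc R θ hR, hωδ] at h3
    linarith
  set R₀ : ℝ := max (2*(δ+ωb)+1) (8*B+1) with hR₀
  have hR₀pos : 0 < R₀ := lt_of_lt_of_le (by positivity) (le_max_left _ _)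
  have harc : ∀ R : ℝ, R₀ ≤ R → ∀ θ ∈ Set.Icc (-(π/2)) (π/2),
      δ ≤ ((δ:ℂ) + (R:ℂ) * Complex.exp ((θ:ℂ) * Complex.I)).re ∧
      ‖Γ ((δ:ℂ) + (R:ℂ) * Complex.exp ((θ:ℂ) * Complex.I))‖ ≤ 2*B/R ∧
      ‖Γ ((δ:ℂ) + (R:ℂ) * Complex.exp ((θ:ℂ) * Complex.I))‖ ≤ 1/4 := by
    intro R hR θ hθ
    have hR1 : 2*(δ+ωb)+1 ≤ R := le_trans (le_max_left _ _) hR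
    have hR2 : 8*B+1 ≤ R := le_trans (le_max_right _ _) hR
    have hRpos : 0 < R := lt_of_lt_of_le hR₀pos hR
    have hcos := Real.cos_nonneg_of_mem_Icc hθ
    have hsre : δ ≤ ((δ:ℂ) + (R:ℂ) * Complex.exp ((θ:ℂ) * Complex.I)).re := by
      rw [hre]; nlinarith
    have hlb := hlow R θ hRpos.le
    have hhalf : R/2 ≤ ‖(δ:ℂ) + (R:ℂ) * Complex.exp ((θ:ℂ) * Complex.I) + (ωb:ℂ)‖ := by
      linarith
    have hpos2 : (0:ℝ) < ‖(δ:ℂ) + (R:ℂ) * Complex.exp ((θ:ℂ) * Complex.I) + (ωb:ℂ)‖ := by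
      linarith
    have hΓ2 : ‖Γ ((δ:ℂ) + (R:ℂ) * Complex.exp ((θ:ℂ) * Complex.I))‖ ≤ 2*B/R := by
      refine (hΓb _ hsre).trans ?_
      rw [div_le_div_iff₀ hpos2 hRpos]
      nlinarith
    refine ⟨hsre, hΓ2, hΓ2.trans ?_⟩
    rw [div_le_iff₀ hRpos]
    nlinarith
  have hle : (-(π/2) : ℝ) ≤ π/2 := by linarith [Real.pi_pos]
  constructor
  · -- first conjunct
    filter_upwards [eventually_ge_atTop R₀] with R hR θ hθ
    have h := (harc R hR θ hθ).2.2
    rw [show ‖Γ ((δ:ℂ) + (R:ℂ) * Complex.exp ((θ:ℂ) * Complex.I))‖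
      = ‖Γ ((δ:ℂ) + (R:ℂ) * Complex.exp ((θ:ℂ) * Complex.I))‖ from rfl]
    linarith
  · -- second conjunct via dominated convergence
    have hΦc : Continuous Φ := by
      rw [show Φ = fun s => ∑ k : Fin K, (β k : ℂ) * Complex.exp (-((m k : ℂ) * (T : ℂ) * s))
        from funext hΦ]
      exact continuous_finset_sum _ fun k _ =>
        continuous_const.mul (Complex.continuous_exp.comp
          ((continuous_const.mul continuous_id).neg))
    have hs_cont : ∀ R : ℝ, Continuous (fun θ : ℝ => (δ:ℂ) + (R:ℂ) * Complex.exp ((θ:ℂ) * Complex.I)) := by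
      intro R
      exact continuous_const.add (continuous_const.mul
        (Complex.continuous_exp.comp (Complex.continuous_ofReal.mul continuous_const)))
    have hmeas : ∀ᶠ R : ℝ in atTop, AEStronglyMeasurable
        (fun θ : ℝ => Complex.log (1 + Γ ((δ:ℂ) + (R:ℂ) * Complex.exp ((θ:ℂ) * Complex.I)))
          * ((R:ℂ) * Complex.exp ((θ:ℂ) * Complex.I)))
        (MeasureTheory.volume.restrict (Set.uIoc (-(π/2)) (π/2))) := by
      filter_upwards [eventually_ge_atTop R₀] with R hR
      apply ContinuousOn.aestronglyMeasurable _ measurableSet_uIoc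
      intro θ hθ
      have hθ' : θ ∈ Set.Icc (-(π/2)) (π/2) := by
        rw [Set.uIoc_of_le hle] at hθ
        exact ⟨hθ.1.le, hθ.2⟩
      obtain ⟨hsre, hΓ2, hΓ3⟩ := harc R hR θ hθ'
      apply ContinuousAt.continuousWithinAt
      have hΦs_cont : ContinuousAt (fun θ : ℝ =>
          Φ ((δ:ℂ) + (R:ℂ) * Complex.exp ((θ:ℂ) * Complex.I))) θ :=
        (hΦc.comp (hs_cont R)).continuousAt
      have hΓs_cont : ContinuousAt (fun θ : ℝ =>
          Γ ((δ:ℂ) + (R:ℂ) * Complex.exp ((θ:ℂ) * Complex.I))) θ := by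
        rw [show (fun θ : ℝ => Γ ((δ:ℂ) + (R:ℂ) * Complex.exp ((θ:ℂ) * Complex.I)))
          = fun θ : ℝ => ((ωc : ℂ) * (L : ℂ) / 2)
            * ((1 + Φ ((δ:ℂ) + (R:ℂ) * Complex.exp ((θ:ℂ) * Complex.I)))
              / (1 - Φ ((δ:ℂ) + (R:ℂ) * Complex.exp ((θ:ℂ) * Complex.I))))
            * ((ωb : ℂ) / ((δ:ℂ) + (R:ℂ) * Complex.exp ((θ:ℂ) * Complex.I) + (ωb : ℂ)))
          from funext fun θ => hΓ _]
        exact (continuousAt_const.mul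
          ((continuousAt_const.add hΦs_cont).div
            (continuousAt_const.sub hΦs_cont) (h1Φne _ hsre))).mul
          (continuousAt_const.div ((hs_cont R).continuousAt.add continuousAt_const)
            (hden _ hsre))
      have hslit : 1 + Γ ((δ:ℂ) + (R:ℂ) * Complex.exp ((θ:ℂ) * Complex.I))
          ∈ Complex.slitPlane := by
        rw [Complex.mem_slitPlane_iff]
        left
        have h6 : |(Γ ((δ:ℂ) + (R:ℂ) * Complex.exp ((θ:ℂ) * Complex.I))).re|
            ≤ ‖Γ ((δ:ℂ) + (R:ℂ) * Complex.exp ((θ:ℂ) * Complex.I))‖ :=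
          Complex.abs_re_le_norm _
        have h7 := abs_le.1 h6
        simp only [Complex.add_re, Complex.one_re]
        linarith
      have hadd : ContinuousAt (fun θ : ℝ =>
          1 + Γ ((δ:ℂ) + (R:ℂ) * Complex.exp ((θ:ℂ) * Complex.I))) θ :=
        continuousAt_const.add hΓs_cont
      have hlog : ContinuousAt (fun θ : ℝ =>
          Complex.log (1 + Γ ((δ:ℂ) + (R:ℂ) * Complex.exp ((θ:ℂ) * Complex.I)))) θ := by
        exact ContinuousAt.comp (g := Complex.log)
          (f := fun θ : ℝ => 1 + Γ ((δ:ℂ) + (R:ℂ) * Complex.exp ((θ:ℂ) * Complex.I)))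
          (continuousAt_clog hslit) hadd
      exact hlog.mul
        (continuous_const.mul
          (Complex.continuous_exp.comp (Complex.continuous_ofReal.mul continuous_const))).continuousAt
    -- uniform bound
    have hbdd : ∀ᶠ R : ℝ in atTop, ∀ᵐ θ : ℝ ∂(MeasureTheory.volume : Measure ℝ),
        θ ∈ Set.uIoc (-(π/2)) (π/2) →
        ‖Complex.log (1 + Γ ((δ:ℂ) + (R:ℂ) * Complex.exp ((θ:ℂ) * Complex.I)))
          * ((R:ℂ) * Complex.exp ((θ:ℂ) * Complex.I))‖ ≤ 3 * B := by
      filter_upwards [eventually_ge_atTop R₀] with R hR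
      refine MeasureTheory.ae_of_all _ fun θ hθ => ?_
      have hθ' : θ ∈ Set.Icc (-(π/2)) (π/2) := by
        rw [Set.uIoc_of_le hle] at hθ
        exact ⟨hθ.1.le, hθ.2⟩
      obtain ⟨hsre, hΓ2, hΓ3⟩ := harc R hR θ hθ'
      have hRpos : 0 < R := lt_of_lt_of_le hR₀pos hR
      rw [norm_mul, hnorm_arc R θ hRpos.le]
      have hlog : ‖Complex.log (1 + Γ ((δ:ℂ) + (R:ℂ) * Complex.exp ((θ:ℂ) * Complex.I)))‖
          ≤ (3/2) * ‖Γ ((δ:ℂ) + (R:ℂ) * Complex.exp ((θ:ℂ) * Complex.I))‖ :=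
        Complex.norm_log_one_add_half_le_self (by linarith)
      calc ‖Complex.log (1 + Γ ((δ:ℂ) + (R:ℂ) * Complex.exp ((θ:ℂ) * Complex.I)))‖ * R
          ≤ ((3/2) * (2*B/R)) * R := by
            apply mul_le_mul_of_nonneg_right _ hRpos.le
            refine hlog.trans ?_
            apply mul_le_mul_of_nonneg_left hΓ2 (by norm_num)
        _ = 3 * B := by field_simp
    -- pointwise limit
    have hlim : ∀ᵐ θ : ℝ ∂(MeasureTheory.volume : Measure ℝ),
        θ ∈ Set.uIoc (-(π/2)) (π/2) →
        Tendsto (fun R : ℝ =>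
            Complex.log (1 + Γ ((δ:ℂ) + (R:ℂ) * Complex.exp ((θ:ℂ) * Complex.I)))
              * ((R:ℂ) * Complex.exp ((θ:ℂ) * Complex.I)))
          atTop (𝓝 ((ωc:ℂ) * (L:ℂ) / 2 * (ωb:ℂ))) := by
      have hb_ne : ∀ᵐ θ : ℝ ∂(MeasureTheory.volume : Measure ℝ), θ ≠ π/2 := by
        have h0 : (MeasureTheory.volume : Measure ℝ) {(π/2 : ℝ)} = 0 := Real.volume_singleton
        rw [MeasureTheory.ae_iff]
        convert h0 using 2
        ext x; simp
      filter_upwards [hb_ne] with θ hθne hθmem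
      have hθIoo : θ ∈ Set.Ioo (-(π/2)) (π/2) := by
        rw [Set.uIoc_of_le hle] at hθmem
        exact ⟨hθmem.1, lt_of_le_of_ne hθmem.2 hθne⟩
      have hcos : 0 < Real.cos θ := Real.cos_pos_of_mem_Ioo hθIoo
      have hθIcc : θ ∈ Set.Icc (-(π/2)) (π/2) := Set.Ioo_subset_Icc_self hθIoo
      -- Φ along the ray tends to 0
      have hΦ0 : Tendsto (fun R : ℝ =>
          Φ ((δ:ℂ) + (R:ℂ) * Complex.exp ((θ:ℂ) * Complex.I))) atTop (𝓝 0) := by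
        apply squeeze_zero_norm'
          (a := fun R : ℝ => Real.exp (-(T * (δ + R * Real.cos θ))))
        · filter_upwards [eventually_ge_atTop 0] with R hR
          have h := hΦb ((δ:ℂ) + (R:ℂ) * Complex.exp ((θ:ℂ) * Complex.I))
            (by rw [hre]; nlinarith)
          rwa [hre] at h
        · apply Real.tendsto_exp_atBot.comp
          have h1 : Tendsto (fun R : ℝ => -(T * Real.cos θ) * R + (-(T * δ))) atTop atBot := by
            apply Filter.tendsto_atBot_add_const_right
            exact Filter.Tendsto.const_mul_atTop_of_neg (by nlinarith) tendsto_id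
          apply h1.congr
          intro R
          ring
      have hA : Tendsto (fun R : ℝ =>
          (1 + Φ ((δ:ℂ) + (R:ℂ) * Complex.exp ((θ:ℂ) * Complex.I)))
            / (1 - Φ ((δ:ℂ) + (R:ℂ) * Complex.exp ((θ:ℂ) * Complex.I)))) atTop (𝓝 1) := by
        have := Filter.Tendsto.div ((tendsto_const_nhds (x := (1:ℂ))).add hΦ0)
          ((tendsto_const_nhds (x := (1:ℂ))).sub hΦ0) (by norm_num : (1:ℂ) - 0 ≠ 0)
        simpa [Pi.div_def] using this
      have hDsmall : Tendsto (fun R : ℝ =>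
          ((δ:ℂ) + (ωb:ℂ)) / ((δ:ℂ) + (R:ℂ) * Complex.exp ((θ:ℂ) * Complex.I) + (ωb:ℂ)))
          atTop (𝓝 0) := by
        apply squeeze_zero_norm' (a := fun R : ℝ => 2 * (δ + ωb) / R)
        · filter_upwards [eventually_ge_atTop (2*(δ+ωb)+1)] with R hR
          have hRpos : 0 < R := by nlinarith
          have hlb := hlow R θ hRpos.le
          have hpos : (0:ℝ) < ‖(δ:ℂ) + (R:ℂ) * Complex.exp ((θ:ℂ) * Complex.I) + (ωb:ℂ)‖ := by
            linarith
          rw [norm_div, hωδ]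
          rw [div_le_div_iff₀ hpos hRpos]
          nlinarith [mul_le_mul_of_nonneg_left hlb (show (0:ℝ) ≤ 2*(δ+ωb) by positivity),
            mul_le_mul_of_nonneg_left hR (show (0:ℝ) ≤ δ+ωb by positivity)]
        · exact tendsto_const_nhds.div_atTop tendsto_id
      have hD : Tendsto (fun R : ℝ =>
          (((δ:ℂ) + (R:ℂ) * Complex.exp ((θ:ℂ) * Complex.I)) - (δ:ℂ))
            / ((δ:ℂ) + (R:ℂ) * Complex.exp ((θ:ℂ) * Complex.I) + (ωb:ℂ))) atTop (𝓝 1) := by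
        have h1 : Tendsto (fun R : ℝ =>
            1 - ((δ:ℂ) + (ωb:ℂ)) / ((δ:ℂ) + (R:ℂ) * Complex.exp ((θ:ℂ) * Complex.I) + (ωb:ℂ)))
            atTop (𝓝 1) := by
          simpa using (tendsto_const_nhds (x := (1:ℂ))).sub hDsmall
        apply h1.congr'
        filter_upwards [eventually_ge_atTop 0] with R hR
        have hsre : δ ≤ ((δ:ℂ) + (R:ℂ) * Complex.exp ((θ:ℂ) * Complex.I)).re := by
          rw [hre]; nlinarith
        have h2 := hden _ hsre
        field_simp
        ring
      have hT2 : Tendsto (fun R : ℝ =>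
          Γ ((δ:ℂ) + (R:ℂ) * Complex.exp ((θ:ℂ) * Complex.I))
            * ((R:ℂ) * Complex.exp ((θ:ℂ) * Complex.I))) atTop
          (𝓝 ((ωc:ℂ) * (L:ℂ) / 2 * (ωb:ℂ))) := by
        have h1 := (tendsto_const_nhds (x := ((ωc:ℂ) * (L:ℂ) / 2 * (ωb:ℂ)))).mul (hA.mul hD)
        rw [mul_one, mul_one] at h1
        apply h1.congr
        intro R
        rw [hΓ]
        ring
      have hT1 : Tendsto (fun R : ℝ =>
          (Complex.log (1 + Γ ((δ:ℂ) + (R:ℂ) * Complex.exp ((θ:ℂ) * Complex.I)))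
            - Γ ((δ:ℂ) + (R:ℂ) * Complex.exp ((θ:ℂ) * Complex.I)))
            * ((R:ℂ) * Complex.exp ((θ:ℂ) * Complex.I))) atTop (𝓝 0) := by
        apply squeeze_zero_norm' (a := fun R : ℝ => 4 * B^2 / R)
        · filter_upwards [eventually_ge_atTop R₀] with R hR
          obtain ⟨hsre, hΓ2, hΓ3⟩ := harc R hR θ hθIcc
          have hRpos : 0 < R := lt_of_lt_of_le hR₀pos hR
          rw [norm_mul, hnorm_arc R θ hRpos.le]
          set u : ℂ := Γ ((δ:ℂ) + (R:ℂ) * Complex.exp ((θ:ℂ) * Complex.I)) with hu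
          have hlt : ‖u‖ < 1 := by rw [hu]; linarith
          have h5 := Complex.norm_log_one_add_sub_self_le hlt
          have h6 : ‖u‖^2 * (1 - ‖u‖)⁻¹ / 2 ≤ ‖u‖^2 := by
            have h7 : (1:ℝ)/2 ≤ 1 - ‖u‖ := by rw [hu] at *; linarith
            have h8 : (1 - ‖u‖)⁻¹ ≤ 2 := by
              rw [inv_le_comm₀ (by linarith) (by norm_num)]
              linarith
            nlinarith [sq_nonneg ‖u‖]
          have h9 : ‖u‖^2 ≤ (2*B/R)^2 := by
            apply pow_le_pow_left₀ (norm_nonneg _) _ 2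
            rw [hu]; exact hΓ2
          calc ‖Complex.log (1 + u) - u‖ * R ≤ ‖u‖^2 * R :=
              mul_le_mul_of_nonneg_right (h5.trans h6) hRpos.le
            _ ≤ (2*B/R)^2 * R := mul_le_mul_of_nonneg_right h9 hRpos.le
            _ = 4 * B^2 / R := by field_simp; ring
        · exact tendsto_const_nhds.div_atTop tendsto_id
      have hsum := hT1.add hT2
      rw [zero_add] at hsum
      apply hsum.congr
      intro R
      ring
    have key := intervalIntegral.tendsto_integral_filter_of_dominated_convergence
      (μ := MeasureTheory.volume) (a := -(π/2)) (b := π/2)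
      (F := fun (R : ℝ) (θ : ℝ) =>
        Complex.log (1 + Γ ((δ:ℂ) + (R:ℂ) * Complex.exp ((θ:ℂ) * Complex.I)))
          * ((R:ℂ) * Complex.exp ((θ:ℂ) * Complex.I)))
      (f := fun _ : ℝ => (ωc:ℂ) * (L:ℂ) / 2 * (ωb:ℂ))
      (bound := fun _ : ℝ => 3 * B) hmeas hbdd intervalIntegrable_const hlim
    have hconst : (∫ _ : ℝ in (-(π/2))..(π/2), ((ωc:ℂ) * (L:ℂ) / 2 * (ωb:ℂ)))
        = ((π * ωb * ωc * L / 2 : ℝ) : ℂ) := by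
      rw [intervalIntegral.integral_const, Complex.real_smul]
      push_cast
      ring
    rw [hconst] at key
    exact key
end
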